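/- arXiv:1804.09854 — 8 statements merged into one kernel-verified Lean document; each statement's English description precedes it below -/
import Mathlib

section
/- Let 𝔪 = ⊕_{p<0}𝔤_p be an FGLA over ℝ with 𝔤_{-2} ≠ 0, g a nondegenerate symmetric bilinear form on 𝔤_{-1}, 𝔤₀ the Lie algebra of all derivations D of 𝔪 with D(𝔤_p) ⊆ 𝔤_p for all p < 0 and D|𝔤_{-1} ∈ co(𝔤_{-1},g), and ĝ₀ = {D ∈ 𝔤₀ : D|𝔤_{-1} ∈ so(𝔤_{-1},g)}. Let E be the derivation of 𝔪 determined by E(X) = pX for X ∈ 𝔤_p (p < 0). Then E ∈ 𝔤₀, E ∉ ĝ₀, and 𝔤₀ = ℝE ⊕ ĝ₀; i.e., every D ∈ 𝔤₀ is uniquely of the form D = cE + D̂ with c ∈ ℝ and D̂ ∈ ĝ₀. -/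
open scoped TensorProduct

section ConformalSubriemannianDefs

variable {L : Type*} [LieRing L] [LieAlgebra ℝ L]

/-- `g` is a ℤ-grading of the Lie algebra `L`: `L` is the internal direct sum of the
subspaces `g p` and `⁅g p, g q⁆ ⊆ g (p + q)`. -/
def IsGLA (g : ℤ → Submodule ℝ L) : Prop :=
  DirectSum.IsInternal g ∧ ∀ p q : ℤ, ∀ x ∈ g p, ∀ y ∈ g q, ⁅x, y⁆ ∈ g (p + q)

/-- Transitivity of a graded Lie algebra. -/
def IsTransitiveGLA (g : ℤ → Submodule ℝ L) : Prop :=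
  ∀ p : ℤ, 0 ≤ p → ∀ x ∈ g p, (∀ y ∈ g (-1), ⁅x, y⁆ = 0) → x = 0

/-- The negative part of the grading is fundamental: `g (-1)` is nonzero and generates
the whole negative part. -/
def IsFundamental (g : ℤ → Submodule ℝ L) : Prop :=
  g (-1) ≠ ⊥ ∧
  ∀ p : ℤ, p < 0 → (g p : Set L) ⊆ ↑(LieSubalgebra.lieSpan ℝ L ↑(g (-1)))

/-- `g` makes `L` itself a fundamental graded Lie algebra (FGLA): all nonnegative pieces
vanish, `g (-1)` is nonzero and generates `L`. -/
def IsFGLA (g : ℤ → Submodule ℝ L) : Prop :=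
  IsGLA g ∧ (∀ p : ℤ, 0 ≤ p → g p = ⊥) ∧ g (-1) ≠ ⊥ ∧
  LieSubalgebra.lieSpan ℝ L ↑(g (-1)) = ⊤

/-- The bilinear form `B` is symmetric on the subspace `W`. -/
def SymmOn (B : L →ₗ[ℝ] L →ₗ[ℝ] ℝ) (W : Submodule ℝ L) : Prop :=
  ∀ x ∈ W, ∀ y ∈ W, B x y = B y x

/-- The bilinear form `B` is nondegenerate on the subspace `W`. -/
def NondegOn (B : L →ₗ[ℝ] L →ₗ[ℝ] ℝ) (W : Submodule ℝ L) : Prop :=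
  ∀ x ∈ W, (∀ y ∈ W, B x y = 0) → x = 0

/-- The endomorphism `D` restricted to `W` lies in `co(W, B)`. -/
def CoOn (B : L →ₗ[ℝ] L →ₗ[ℝ] ℝ) (W : Submodule ℝ L) (D : L →ₗ[ℝ] L) : Prop :=
  ∃ η : ℝ, ∀ x ∈ W, ∀ y ∈ W, B (D x) y + B x (D y) = η * B x y

/-- The endomorphism `D` restricted to `W` lies in `so(W, B)`. -/
def SoOn (B : L →ₗ[ℝ] L →ₗ[ℝ] ℝ) (W : Submodule ℝ L) (D : L →ₗ[ℝ] L) : Prop :=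
  ∀ x ∈ W, ∀ y ∈ W, B (D x) y + B x (D y) = 0

/-- `D` is a derivation of the Lie algebra `L`. -/
def IsLieDeriv (D : L →ₗ[ℝ] L) : Prop :=
  ∀ x y : L, D ⁅x, y⁆ = ⁅D x, y⁆ + ⁅x, D y⁆

/-- The bilinear form `B` has signature `(r, s)` on the subspace `W`. -/
def HasSignatureOn (B : L →ₗ[ℝ] L →ₗ[ℝ] ℝ) (W : Submodule ℝ L) (r s : ℕ) : Prop :=
  ∃ P N : Submodule ℝ L, P ⊓ N = ⊥ ∧ P ⊔ N = W ∧
    Module.finrank ℝ P = r ∧ Module.finrank ℝ N = s ∧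
    (∀ x ∈ P, ∀ y ∈ N, B x y = 0) ∧
    (∀ x ∈ P, x ≠ 0 → 0 < B x x) ∧ (∀ x ∈ N, x ≠ 0 → B x x < 0)

end ConformalSubriemannianDefs

/-- For an FGLA `𝔪` with `𝔤₋₂ ≠ 0` and a nondegenerate symmetric bilinear
form `g` on `𝔤₋₁`, the grading derivation `E` (with `E X = p • X` for `X ∈ 𝔤_p`) belongs to
`𝔤₀`, does not belong to `ĝ₀`, and `𝔤₀ = ℝE ⊕ ĝ₀`: every `D ∈ 𝔤₀` is uniquely of the form
`D = c • E + D̂` with `c ∈ ℝ` and `D̂ ∈ ĝ₀`. -/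
theorem g0_eq_span_E_sup_hatG0
    {M : Type*} [LieRing M] [LieAlgebra ℝ M] [FiniteDimensional ℝ M]
    (g : ℤ → Submodule ℝ M) (hFGLA : IsFGLA g) (hg2 : g (-2) ≠ ⊥)
    (B : M →ₗ[ℝ] M →ₗ[ℝ] ℝ) (hBsymm : SymmOn B (g (-1))) (hBnd : NondegOn B (g (-1)))
    (E : M →ₗ[ℝ] M)
    (hE : ∀ p : ℤ, p < 0 → ∀ x ∈ g p, E x = (p : ℝ) • x) :
    (IsLieDeriv E ∧ (∀ p : ℤ, p < 0 → ∀ x ∈ g p, E x ∈ g p) ∧ CoOn B (g (-1)) E) ∧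
    ¬ SoOn B (g (-1)) E ∧
    ∀ D : M →ₗ[ℝ] M,
      (IsLieDeriv D ∧ (∀ p : ℤ, p < 0 → ∀ x ∈ g p, D x ∈ g p) ∧ CoOn B (g (-1)) D) →
      ∃! cD : ℝ × (M →ₗ[ℝ] M),
        (IsLieDeriv cD.2 ∧ (∀ p : ℤ, p < 0 → ∀ x ∈ g p, cD.2 x ∈ g p) ∧
          SoOn B (g (-1)) cD.2) ∧
        D = cD.1 • E + cD.2 := by
  obtain ⟨⟨hInt, hBr⟩, hNonneg, hne, -⟩ := hFGLA
  have htop : (⨆ p, g p) = ⊤ := hInt.submodule_iSup_eq_top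
  have hEp : ∀ p : ℤ, ∀ x ∈ g p, E x = (p : ℝ) • x := by
    intro p x hx
    rcases lt_or_ge p 0 with h | h
    · exact hE p h x hx
    · have hx0 : x = 0 := by
        have hb := hNonneg p h
        rw [hb] at hx
        simpa using hx
      simp [hx0]
  have hEneg : ∀ x ∈ g (-1), E x = -x := by
    intro x hx
    rw [hEp (-1) x hx]
    push_cast
    simp
  have hEmem : ∀ p : ℤ, ∀ x ∈ g p, E x ∈ g p := by
    intro p x hx
    rw [hEp p x hx]
    exact Submodule.smul_mem _ _ hx
  have hEderiv : IsLieDeriv E := by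
    have step : ∀ (p : ℤ), ∀ x ∈ g p, ∀ y, E ⁅x, y⁆ = ⁅E x, y⁆ + ⁅x, E y⁆ := by
      intro p x hx y
      have hy : y ∈ (⨆ q, g q) := htop ▸ Submodule.mem_top
      induction hy using Submodule.iSup_induction' with
      | mem q y hy =>
          have hb := hBr p q x hx y hy
          rw [hEp p x hx, hEp q y hy, hEp (p + q) _ hb, smul_lie, lie_smul,
            Int.cast_add, add_smul]
      | zero => simp
      | add y z _ _ hy hz =>
          rw [lie_add, map_add, hy, hz, map_add, lie_add, lie_add]
          abel
    intro x y
    have hx : x ∈ (⨆ p, g p) := htop ▸ Submodule.mem_top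
    induction hx using Submodule.iSup_induction' with
    | mem p x hx => exact step p x hx y
    | zero => simp
    | add a b _ _ ha hb =>
        rw [add_lie, map_add, ha, hb, map_add, add_lie, add_lie]
        abel
  have hEco : CoOn B (g (-1)) E := by
    refine ⟨-2, fun x hx y hy => ?_⟩
    rw [hEneg x hx, hEneg y hy]
    simp only [map_neg, LinearMap.neg_apply]
    ring
  have hEnotso : ¬ SoOn B (g (-1)) E := by
    intro h
    obtain ⟨x, hx, hx0⟩ := Submodule.exists_mem_ne_zero_of_ne_bot hne
    refine hx0 (hBnd x hx fun y hy => ?_)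
    have h1 := h x hx y hy
    rw [hEneg x hx, hEneg y hy] at h1
    simp only [map_neg, LinearMap.neg_apply] at h1
    linarith
  refine ⟨⟨hEderiv, fun p _ x hx => hEmem p x hx, hEco⟩, hEnotso, ?_⟩
  rintro D ⟨hDder, hDmem, η, hη⟩
  refine ⟨(-η / 2, D - (-η / 2) • E), ⟨⟨?_, ?_, ?_⟩, ?_⟩, ?_⟩
  · intro x y
    simp only [LinearMap.sub_apply, LinearMap.smul_apply]
    rw [hDder x y, hEderiv x y, smul_add, sub_lie, lie_sub, smul_lie, lie_smul]
    abel
  · intro p hp x hx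
    exact Submodule.sub_mem _ (hDmem p hp x hx)
      (Submodule.smul_mem _ _ (hEmem p x hx))
  · intro x hx y hy
    have h1 := hη x hx y hy
    simp only [LinearMap.sub_apply, LinearMap.smul_apply, map_sub, map_smul,
      LinearMap.sub_apply, LinearMap.smul_apply, smul_eq_mul]
    rw [hEneg x hx, hEneg y hy]
    simp only [map_neg, LinearMap.neg_apply]
    linear_combination h1
  · module
  · rintro ⟨c', D'⟩ ⟨⟨hD'der, hD'mem, hD'so⟩, hD'eq⟩
    obtain ⟨x₀, hx₀, hx0⟩ := Submodule.exists_mem_ne_zero_of_ne_bot hne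
    have hexy : ∃ y₀ ∈ g (-1), B x₀ y₀ ≠ 0 := by
      by_contra hcon
      push_neg at hcon
      exact hx0 (hBnd x₀ hx₀ hcon)
    obtain ⟨y₀, hy₀, hBne⟩ := hexy
    have hDa : ∀ z, D z = c' • E z + D' z := by
      intro z
      rw [hD'eq]
      simp
    have h1 := hη x₀ hx₀ y₀ hy₀
    have h2 := hD'so x₀ hx₀ y₀ hy₀
    rw [hDa x₀, hDa y₀, hEneg x₀ hx₀, hEneg y₀ hy₀] at h1
    simp only [map_add, map_smul, map_neg, LinearMap.add_apply, LinearMap.smul_apply,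
      LinearMap.neg_apply, smul_eq_mul, smul_neg] at h1
    have h3 : (η + 2 * c') * B x₀ y₀ = 0 := by linear_combination h2 - h1
    have hc' : c' = -η / 2 := by
      rcases mul_eq_zero.mp h3 with h | h
      · linarith
      · exact absurd h hBne
    have hD'' : D' = D - (-η / 2) • E := by
      rw [hD'eq, hc']
      module
    exact Prod.ext hc' hD''
end

section
/- Let 𝔪 = ⊕_{p<0}𝔤_p be an FGLA over ℝ with 𝔤_{-2} ≠ 0 and dim 𝔤_{-1} = 2, and let g be a nondegenerate symmetric bilinear form on 𝔤_{-1}. Let D be a derivation of 𝔪 such that D(𝔤_p) ⊆ 𝔤_p for all p < 0, D|𝔤_{-1} ∈ co(𝔤_{-1},g), and D vanishes on 𝔤_p for every p ≤ −2. Then D|𝔤_{-1} ∈ so(𝔤_{-1},g); that is, the conformal factor of D|𝔤_{-1} is zero. -/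
open scoped TensorProduct

/-- Let `𝔪` be an FGLA with `𝔤₋₂ ≠ 0` and `dim 𝔤₋₁ = 2`, and `g` a
nondegenerate symmetric bilinear form on `𝔤₋₁`. Any grading-preserving derivation `D`
of `𝔪` with `D|𝔤₋₁ ∈ co(𝔤₋₁, g)` that vanishes on `𝔤_p` for all `p ≤ -2` satisfies
`D|𝔤₋₁ ∈ so(𝔤₋₁, g)`: its conformal factor is zero. -/
theorem conformal_factor_zero_of_dim_two
    {M : Type*} [LieRing M] [LieAlgebra ℝ M] [FiniteDimensional ℝ M]
    (g : ℤ → Submodule ℝ M) (hFGLA : IsFGLA g) (hg2 : g (-2) ≠ ⊥)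
    (hdim : Module.finrank ℝ ↥(g (-1)) = 2)
    (B : M →ₗ[ℝ] M →ₗ[ℝ] ℝ) (hBsymm : SymmOn B (g (-1))) (hBnd : NondegOn B (g (-1)))
    (D : M →ₗ[ℝ] M) (hDder : IsLieDeriv D)
    (hDgr : ∀ p : ℤ, p < 0 → ∀ x ∈ g p, D x ∈ g p)
    (hDco : CoOn B (g (-1)) D)
    (hDvan : ∀ p : ℤ, p ≤ -2 → ∀ x ∈ g p, D x = 0) :
    SoOn B (g (-1)) D := by
  
  -- Setup: basis of g(-1)
  classical
  set W := g (-1) with hW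
  obtain ⟨η, heq⟩ := hDco
  have bs : Module.Basis (Fin 2) ℝ ↥W := Module.finBasisOfFinrankEq ℝ ↥W hdim
  set e1 : M := (bs 0 : M) with he1def
  set e2 : M := (bs 1 : M) with he2def
  have he1 : e1 ∈ W := (bs 0).2
  have he2 : e2 ∈ W := (bs 1).2
  have hrepr : ∀ v : ↥W, (v : M) = (bs.repr v 0) • e1 + (bs.repr v 1) • e2 := by
    intro v
    have h := bs.sum_repr v
    rw [Fin.sum_univ_two] at h
    have h2 := congrArg (Subtype.val : ↥W → M) h.symm
    simpa using h2
  -- bracket e1 e2 lands in g(-2)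
  have hbr_mem : ⁅e1, e2⁆ ∈ g (-2) := by
    have := hFGLA.1.2 (-1) (-1) e1 he1 e2 he2
    norm_num at this
    exact this
  -- bracket e1 e2 is nonzero
  have hbr_ne : ⁅e1, e2⁆ ≠ 0 := by
    intro hbr
    have hbr2 : ⁅e2, e1⁆ = (0 : M) := by rw [← lie_skew, hbr, neg_zero]
    have habel : ∀ x ∈ W, ∀ y ∈ W, ⁅x, y⁆ = (0 : M) := by
      intro x hx y hy
      obtain ⟨a, b, hxe⟩ : ∃ a b : ℝ, x = a • e1 + b • e2 := ⟨_, _, hrepr ⟨x, hx⟩⟩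
      obtain ⟨c, d, hye⟩ : ∃ c d : ℝ, y = c • e1 + d • e2 := ⟨_, _, hrepr ⟨y, hy⟩⟩
      rw [hxe, hye]
      simp [lie_add, add_lie, lie_smul, smul_lie, hbr, hbr2]
    have hlie : ∀ {x y : M}, x ∈ W → y ∈ W → ⁅x, y⁆ ∈ W := by
      intro x y hx hy
      rw [habel x hx y hy]; exact W.zero_mem
    let S : LieSubalgebra ℝ M := { W with lie_mem' := hlie }
    have hle : LieSubalgebra.lieSpan ℝ M ↑W ≤ S :=
      (LieSubalgebra.lieSpan_le).mpr (by intro z hz; exact hz)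
    rw [hFGLA.2.2.2] at hle
    -- now every element of M is in W
    obtain ⟨z, hz2, hzne⟩ := (Submodule.ne_bot_iff _).mp hg2
    have hzW : z ∈ W := hle (LieSubalgebra.mem_top z)
    have hdisj := (DirectSum.IsInternal.submodule_iSupIndep hFGLA.1.1) (-2 : ℤ)
    have hzsup : z ∈ ⨆ j ≠ (-2 : ℤ), g j := by
      refine Submodule.mem_iSup_of_mem (-1) ?_
      refine Submodule.mem_iSup_of_mem (by norm_num) hzW
    exact hzne (Submodule.mem_bot (R := ℝ) (M := M) |>.mp
      (hdisj.le_bot ⟨hz2, hzsup⟩))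
  -- coordinates of D e1 and D e2
  have hD1 : D e1 ∈ W := hDgr (-1) (by norm_num) e1 he1
  have hD2 : D e2 ∈ W := hDgr (-1) (by norm_num) e2 he2
  set α : ℝ := bs.repr ⟨D e1, hD1⟩ 0 with hα
  set β : ℝ := bs.repr ⟨D e1, hD1⟩ 1 with hβ
  set γ : ℝ := bs.repr ⟨D e2, hD2⟩ 0 with hγ
  set δ : ℝ := bs.repr ⟨D e2, hD2⟩ 1 with hδ
  have hDe1 : D e1 = α • e1 + β • e2 := hrepr ⟨D e1, hD1⟩
  have hDe2 : D e2 = γ • e1 + δ • e2 := hrepr ⟨D e2, hD2⟩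
  -- trace zero
  have htr : α + δ = 0 := by
    have h0 : D ⁅e1, e2⁆ = 0 := hDvan (-2) le_rfl _ hbr_mem
    have h1 := hDder e1 e2
    rw [h0, hDe1, hDe2] at h1
    simp only [add_lie, lie_add, smul_lie, lie_smul, lie_self, smul_zero, add_zero,
      zero_add] at h1
    have h2 : (α + δ) • ⁅e1, e2⁆ = 0 := by
      rw [add_smul]
      have : β • ⁅e2, e2⁆ = (0:M) := by simp
      linear_combination (norm := module) -h1
    rcases smul_eq_zero.mp h2 with h | h
    · exact h
    · exact absurd h hbr_ne
  -- bilinear form equations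
  have h21 : B e2 e1 = B e1 e2 := hBsymm e2 he2 e1 he1
  have E1 := heq e1 he1 e1 he1
  have E2 := heq e2 he2 e2 he2
  have E3 := heq e1 he1 e2 he2
  rw [hDe1] at E1 E3
  rw [hDe2] at E2 E3
  simp only [map_add, map_smul, LinearMap.add_apply, LinearMap.smul_apply,
    smul_eq_mul, h21] at E1 E2 E3
  set B11 : ℝ := B e1 e1 with hB11
  set B12 : ℝ := B e1 e2 with hB12
  set B22 : ℝ := B e2 e2 with hB22
  have hdet0 : η * (B11 * B22 - B12 ^ 2) = 0 := by
    linear_combination (-(B22/2)) * E1 + (-(B11/2)) * E2 + B12 * E3 +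
      (B11 * B22 - B12 ^ 2) * (mul_comm B12 B12) + (B11 * B22 - B12 ^ 2) * htr
  have hη : η = 0 := by
    by_contra hηne
    have hdet : B11 * B22 - B12 ^ 2 = 0 := by
      rcases mul_eq_zero.mp hdet0 with h | h
      · exact absurd h hηne
      · exact h
    -- det = 0 implies degenerate
    have r11 : (B e1) e1 = B11 := rfl
    have r12 : (B e1) e2 = B12 := rfl
    have r22 : (B e2) e2 = B22 := rfl
    have hx : B22 • e1 - B12 • e2 = 0 := by
      apply hBnd _ (W.sub_mem (W.smul_mem _ he1) (W.smul_mem _ he2))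
      intro y hy
      obtain ⟨p, q, hye⟩ : ∃ p q : ℝ, y = p • e1 + q • e2 := ⟨_, _, hrepr ⟨y, hy⟩⟩
      rw [hye]
      simp only [map_sub, map_add, map_smul, LinearMap.sub_apply, LinearMap.add_apply,
        LinearMap.smul_apply, smul_eq_mul, h21, r11, r12, r22]
      linear_combination p * hdet
    have hx0 : B22 • bs 0 - B12 • bs 1 = (0 : ↥W) := by
      apply Subtype.ext
      push_cast
      exact hx
    have hB22z : B22 = 0 := by
      have h0 := congrArg (fun v => (bs.repr v) 0) hx0
      simpa using h0
    have hB12z : B12 = 0 := by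
      have h1 := congrArg (fun v => (bs.repr v) 1) hx0
      simpa using h1
    -- then e2 annihilates everything
    have he2z : e2 = 0 := by
      apply hBnd _ he2
      intro y hy
      obtain ⟨p, q, hye⟩ : ∃ p q : ℝ, y = p • e1 + q • e2 := ⟨_, _, hrepr ⟨y, hy⟩⟩
      rw [hye]
      simp only [map_add, map_smul, LinearMap.add_apply, LinearMap.smul_apply,
        smul_eq_mul]
      rw [h21, r22, hB22z, hB12z]
      ring
    have : (bs 1 : ↥W) = 0 := Subtype.ext he2z
    exact bs.ne_zero 1 this
  intro x hx y hy
  have := heq x hx y hy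
  rw [hη] at this
  simpa using this
end

section
/- Let V be a finite-dimensional real vector space and g a nondegenerate symmetric bilinear form on V of signature (r,s). Let 𝔞 be a linear subspace of End(V) contained in so(V,g), and suppose V decomposes as a direct sum of joint eigenspaces of 𝔞: there exist finitely many linear functionals λ₁,…,λ_k on 𝔞 such that V = ⊕_{i=1}^k V^{λ_i}, where V^{λ} = {v ∈ V : A v = λ(A) v for all A ∈ 𝔞}. Then V contains a subspace U that is totally isotropic for g with dim U ≥ dim 𝔞; consequently dim 𝔞 ≤ min{r,s}. -/
open Module

/-- A finite family of linear functionals on a real vector space admits a common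
non-vanishing point (away from the kernels of the nonzero ones). -/
lemma aux_exists_forall_ne_zero {M : Type*} [AddCommGroup M] [Module ℝ M]
    {k : ℕ} (f : Fin k → (M →ₗ[ℝ] ℝ)) :
    ∃ a : M, ∀ i, f i ≠ 0 → f i a ≠ 0 := by
  by_contra h
  push_neg at h
  have hcov : ⋃ p : {i : Fin k // f i ≠ 0},
      ((LinearMap.ker (f p.1) : Submodule ℝ M) : Set M) = Set.univ := by
    ext a
    simp only [Set.mem_iUnion, Set.mem_univ, iff_true, SetLike.mem_coe, LinearMap.mem_ker]
    obtain ⟨i, hi, hia⟩ := h a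
    exact ⟨⟨i, hi⟩, hia⟩
  obtain ⟨p, hp⟩ := Subspace.exists_eq_top_of_iUnion_eq_univ hcov
  exact p.2 (LinearMap.ker_eq_top.mp hp)

/-- Let `V` be a finite-dimensional real vector space with a nondegenerate
symmetric bilinear form `B` of signature `(r, s)`, and let `𝔞 ⊆ so(V, B)` be a linear
subspace of endomorphisms such that `V` is the direct sum of joint eigenspaces of `𝔞`.
Then `V` contains a totally isotropic subspace `U` with `dim U ≥ dim 𝔞`, and consequently
`dim 𝔞 ≤ min r s`. -/
theorem dim_diagonalizable_subalgebra_le_min_signature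
    {V : Type*} [AddCommGroup V] [Module ℝ V] [FiniteDimensional ℝ V]
    (B : V →ₗ[ℝ] V →ₗ[ℝ] ℝ)
    (hBsymm : ∀ x y : V, B x y = B y x)
    (hBnd : ∀ x : V, (∀ y : V, B x y = 0) → x = 0)
    (r s : ℕ)
    (hsig : ∃ P N : Submodule ℝ V, P ⊓ N = ⊥ ∧ P ⊔ N = ⊤ ∧
      Module.finrank ℝ ↥P = r ∧ Module.finrank ℝ ↥N = s ∧
      (∀ x ∈ P, ∀ y ∈ N, B x y = 0) ∧
      (∀ x ∈ P, x ≠ 0 → 0 < B x x) ∧ (∀ x ∈ N, x ≠ 0 → B x x < 0))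
    (𝔞 : Submodule ℝ (V →ₗ[ℝ] V))
    (hso : ∀ A ∈ 𝔞, ∀ x y : V, B (A x) y + B x (A y) = 0)
    (k : ℕ) (lam : Fin k → (↥𝔞 →ₗ[ℝ] ℝ)) (W : Fin k → Submodule ℝ V)
    (hW : ∀ i : Fin k, ∀ v : V, v ∈ W i ↔ ∀ A : ↥𝔞, (A : V →ₗ[ℝ] V) v = lam i A • v)
    (hdec : DirectSum.IsInternal W) :
    (∃ U : Submodule ℝ V, (∀ x ∈ U, ∀ y ∈ U, B x y = 0) ∧
      Module.finrank ℝ ↥𝔞 ≤ Module.finrank ℝ ↥U) ∧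
    Module.finrank ℝ ↥𝔞 ≤ min r s := by
  classical
  obtain ⟨P, N, hPN, hPN', hrP, hsN, hPNorth, hPpos, hNneg⟩ := hsig
  -- Key computation: `(λᵢ(A) + λⱼ(A)) ⬝ B(v, w) = 0` for eigenvectors `v, w`.
  have key : ∀ i j : Fin k, ∀ v ∈ W i, ∀ w ∈ W j, ∀ A : ↥𝔞,
      (lam i A + lam j A) * B v w = 0 := by
    intro i j v hv w hw A
    have h1 : (A : V →ₗ[ℝ] V) v = lam i A • v := (hW i v).mp hv A
    have h2 : (A : V →ₗ[ℝ] V) w = lam j A • w := (hW j w).mp hw A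
    have h3 := hso (A : V →ₗ[ℝ] V) A.2 v w
    rw [h1, h2] at h3
    simp only [map_smul, LinearMap.smul_apply, smul_eq_mul] at h3
    ring_nf
    ring_nf at h3
    linarith
  -- Hence components of different "non-opposite" weights are orthogonal.
  have key' : ∀ i j : Fin k, lam i ≠ -lam j → ∀ v ∈ W i, ∀ w ∈ W j, B v w = 0 := by
    intro i j hij v hv w hw
    have hA : ∃ A : ↥𝔞, lam i A + lam j A ≠ 0 := by
      by_contra hno
      push_neg at hno
      apply hij
      ext A
      simp only [LinearMap.neg_apply]
      linarith [hno A]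
    obtain ⟨A, hA⟩ := hA
    rcases mul_eq_zero.mp (key i j v hv w hw A) with h | h
    · exact absurd h hA
    · exact h
  -- Occurring weights are closed under negation (by nondegeneracy of `B`).
  have hneg : ∀ i : Fin k, ∀ v ∈ W i, v ≠ 0 → ∃ j : Fin k, lam j = -lam i ∧ W j ≠ ⊥ := by
    intro i v hv hv0
    by_contra h
    push_neg at h
    apply hv0
    apply hBnd
    intro y
    have hy : y ∈ ⨆ j, W j := by rw [hdec.submodule_iSup_eq_top]; trivial
    refine Submodule.iSup_induction (motive := fun y => B v y = 0) W hy ?_ (map_zero _) ?_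
    · intro j w hw
      by_cases hj : lam j = -lam i
      · have hb := h j hj
        rw [hb] at hw
        rw [Submodule.mem_bot] at hw
        rw [hw, map_zero]
      · refine key' i j ?_ v hv w hw
        intro hc
        apply hj
        rw [hc, neg_neg]
    · intro a b ha hb
      rw [map_add, ha, hb, add_zero]
  -- A "generic" element `A₀ ∈ 𝔞`, not annihilated by any nonzero weight.
  obtain ⟨A₀, hA₀⟩ := aux_exists_forall_ne_zero lam
  -- The "positive" part of the weight decomposition.
  set Spos : Finset (Fin k) :=
    Finset.univ.filter (fun i => 0 < lam i A₀ ∧ W i ≠ ⊥) with hSpos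
  set U : Submodule ℝ V := ⨆ i : {i // i ∈ Spos}, W i with hU
  -- `U` is totally isotropic.
  have hUiso : ∀ x ∈ U, ∀ y ∈ U, B x y = 0 := by
    have hne2 : ∀ i j : {i // i ∈ Spos}, lam i.1 ≠ -lam j.1 := by
      intro i j hc
      have hi : 0 < lam i.1 A₀ := ((Finset.mem_filter.mp i.2).2).1
      have hj : 0 < lam j.1 A₀ := ((Finset.mem_filter.mp j.2).2).1
      have hval : lam i.1 A₀ = -(lam j.1 A₀) := by
        rw [hc]; simp
      linarith
    have inner : ∀ i : {i // i ∈ Spos}, ∀ v ∈ W i.1, ∀ y ∈ U, B v y = 0 := by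
      intro i v hv y hy
      refine Submodule.iSup_induction (motive := fun y => B v y = 0)
        (fun j : {i // i ∈ Spos} => W j.1) hy ?_ (map_zero _) ?_
      · intro j w hw
        exact key' i.1 j.1 (hne2 i j) v hv w hw
      · intro a b ha hb
        rw [map_add, ha, hb, add_zero]
    intro x hx
    refine Submodule.iSup_induction (motive := fun x => ∀ y ∈ U, B x y = 0)
      (fun i : {i // i ∈ Spos} => W i.1) hx inner ?_ ?_
    · intro y hy
      rw [map_zero, LinearMap.zero_apply]
    · intro a b ha hb y hy
      rw [map_add, LinearMap.add_apply, ha y hy, hb y hy, add_zero]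
  -- The weights over `Spos` span the whole dual of `𝔞`.
  set T : Finset (Module.Dual ℝ ↥𝔞) := Spos.image lam with hT
  have hcoann : (Submodule.span ℝ (T : Set (Module.Dual ℝ ↥𝔞))).dualCoannihilator = ⊥ := by
    rw [eq_bot_iff]
    intro A hA
    rw [Submodule.mem_dualCoannihilator] at hA
    have hTz : ∀ i ∈ Spos, lam i A = 0 := fun i hi =>
      hA (lam i) (Submodule.subset_span (Finset.mem_coe.mpr (Finset.mem_image_of_mem lam hi)))
    have hAV : (A : V →ₗ[ℝ] V) = 0 := by
      ext v
      have hv : v ∈ ⨆ j, W j := by rw [hdec.submodule_iSup_eq_top]; trivial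
      rw [LinearMap.zero_apply]
      refine Submodule.iSup_induction (motive := fun v => (A : V →ₗ[ℝ] V) v = 0) W hv ?_
        (map_zero _) ?_
      · intro i v hv
        rw [(hW i v).mp hv A]
        rcases eq_or_ne v 0 with h0 | h0
        · rw [h0, smul_zero]
        · have hlam : lam i A = 0 := by
            rcases eq_or_ne (lam i) 0 with hz | hz
            · rw [hz]; rfl
            · rcases lt_or_gt_of_ne (hA₀ i hz) with hlt | hgt
              · obtain ⟨j, hj, hjne⟩ := hneg i v hv h0
                have hjS : j ∈ Spos := by
                  refine Finset.mem_filter.mpr ⟨Finset.mem_univ _, ?_, hjne⟩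
                  rw [hj]
                  simpa using hlt
                have hz' := hTz j hjS
                rw [hj] at hz'
                simpa using hz'
              · have hiS : i ∈ Spos := by
                  refine Finset.mem_filter.mpr ⟨Finset.mem_univ _, hgt, ?_⟩
                  intro hbot
                  rw [hbot, Submodule.mem_bot] at hv
                  exact h0 hv
                exact hTz i hiS
          rw [hlam, zero_smul]
      · intro a b ha hb
        rw [map_add, ha, hb, add_zero]
    rw [Submodule.mem_bot]
    exact Subtype.ext (by simpa using hAV)
  -- Dimension count.
  have hspan : finrank ℝ ↥𝔞
      = finrank ℝ ↥(Submodule.span ℝ (T : Set (Module.Dual ℝ ↥𝔞))) := by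
    have heq := Subspace.finrank_add_finrank_dualCoannihilator_eq
      (Submodule.span ℝ (T : Set (Module.Dual ℝ ↥𝔞)))
    rw [hcoann, finrank_bot] at heq
    omega
  have hcard : Spos.card ≤ finrank ℝ ↥U := by
    have hchoice : ∀ i : {i // i ∈ Spos}, ∃ v : V, v ∈ W i.1 ∧ v ≠ 0 := by
      intro i
      have hne := ((Finset.mem_filter.mp i.2).2).2
      obtain ⟨v, hv, hv0⟩ := (Submodule.ne_bot_iff _).mp hne
      exact ⟨v, hv, hv0⟩
    choose v hvW hv0 using hchoice
    have hind : iSupIndep (fun i : {i // i ∈ Spos} => W i.1) :=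
      hdec.submodule_iSupIndep.comp Subtype.val_injective
    have hli : LinearIndependent ℝ v := iSupIndep.linearIndependent (fun i : {i // i ∈ Spos} => W i.1) hind hvW hv0
    have hvU : ∀ i, v i ∈ U := fun i => le_iSup (fun j : {i // i ∈ Spos} => W j.1) i (hvW i)
    have hli' : LinearIndependent ℝ (fun i : {i // i ∈ Spos} => (⟨v i, hvU i⟩ : ↥U)) := by
      apply LinearIndependent.of_comp U.subtype
      exact hli
    have hcc := hli'.fintype_card_le_finrank
    simpa [Fintype.card_coe] using hcc
  have hmain : finrank ℝ ↥𝔞 ≤ finrank ℝ ↥U := by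
    have h1 : finrank ℝ ↥(Submodule.span ℝ (T : Set (Module.Dual ℝ ↥𝔞))) ≤ T.card :=
      finrank_span_finset_le_card T
    have h2 : T.card ≤ Spos.card := Finset.card_image_le
    omega
  -- Totally isotropic subspaces have dimension at most `min r s`.
  have hcompl : IsCompl P N := ⟨disjoint_iff.mpr hPN, codisjoint_iff.mpr hPN'⟩
  have h1 : finrank ℝ ↥U ≤ r := by
    rw [← hrP]
    have hinj : Function.Injective ((P.linearProjOfIsCompl N hcompl).comp U.subtype) := by
      rw [← LinearMap.ker_eq_bot, eq_bot_iff]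
      intro x hx
      rw [LinearMap.mem_ker, LinearMap.comp_apply] at hx
      have hxN : (x : V) ∈ N :=
        (Submodule.linearProjOfIsCompl_apply_eq_zero_iff hcompl).mp hx
      have hxx : B x x = 0 := hUiso x x.2 x x.2
      have hx0 : (x : V) = 0 := by
        by_contra hc
        exact absurd hxx (hNneg x hxN hc).ne
      rw [Submodule.mem_bot]
      exact Subtype.ext hx0
    exact LinearMap.finrank_le_finrank_of_injective hinj
  have h2 : finrank ℝ ↥U ≤ s := by
    rw [← hsN]
    have hinj : Function.Injective ((N.linearProjOfIsCompl P hcompl.symm).comp U.subtype) := by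
      rw [← LinearMap.ker_eq_bot, eq_bot_iff]
      intro x hx
      rw [LinearMap.mem_ker, LinearMap.comp_apply] at hx
      have hxP : (x : V) ∈ P :=
        (Submodule.linearProjOfIsCompl_apply_eq_zero_iff hcompl.symm).mp hx
      have hxx : B x x = 0 := hUiso x x.2 x x.2
      have hx0 : (x : V) = 0 := by
        by_contra hc
        exact absurd hxx (hPpos x hxP hc).ne'
      rw [Submodule.mem_bot]
      exact Subtype.ext hx0
    exact LinearMap.finrank_le_finrank_of_injective hinj
  exact ⟨⟨U, hUiso, hmain⟩, le_trans hmain (le_min h1 h2)⟩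
end

section
/- Let 𝔤 = ⊕_{p∈ℤ}𝔤_p be a transitive GLA over ℝ whose negative part is an FGLA with 𝔤_{-2} ≠ 0, and let g be a nondegenerate symmetric bilinear form on 𝔤_{-1} of signature (r,s) such that ad X|𝔤_{-1} ∈ co(𝔤_{-1},g) for every X ∈ 𝔤₀. Suppose 𝔤₀ contains a characteristic element E, i.e., ⁅E,X⁆ = pX for all X ∈ 𝔤_p and all p. Let 𝔞 be an abelian Lie subalgebra of 𝔤 contained in 𝔤₀ with E ∈ 𝔞, such that the adjoint action of 𝔞 on 𝔤_{-1} is simultaneously diagonalizable over ℝ (𝔤_{-1} is the direct sum of the joint eigenspaces {v : ⁅A,v⁆ = λ(A)v for all A ∈ 𝔞} over finitely many linear functionals λ on 𝔞). Then dim 𝔞 ≤ min{r,s} + 1. -/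
open scoped TensorProduct

set_option maxHeartbeats 1000000

/-- Let `𝔤` be a transitive GLA whose negative part is an FGLA with
`𝔤₋₂ ≠ 0`, equipped with a nondegenerate symmetric bilinear form `g` of signature `(r, s)`
on `𝔤₋₁` with respect to which `𝔤₀` acts conformally. If `𝔞 ⊆ 𝔤₀` is an abelian subalgebra
containing the characteristic element `E` whose adjoint action on `𝔤₋₁` is simultaneously
diagonalizable over `ℝ`, then `dim 𝔞 ≤ min r s + 1`. -/
theorem dim_diagonalizable_abelian_le
    {L : Type*} [LieRing L] [LieAlgebra ℝ L]
    (g : ℤ → Submodule ℝ L) (hg : IsGLA g) (htr : IsTransitiveGLA g)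
    (hfund : IsFundamental g) (hg2 : g (-2) ≠ ⊥)
    (hnegfin : ∀ p : ℤ, p < 0 → FiniteDimensional ℝ ↥(g p))
    (B : L →ₗ[ℝ] L →ₗ[ℝ] ℝ) (r s : ℕ)
    (hBsymm : SymmOn B (g (-1))) (hBnd : NondegOn B (g (-1)))
    (hsig : HasSignatureOn B (g (-1)) r s)
    (had : ∀ x ∈ g 0, CoOn B (g (-1)) (LieAlgebra.ad ℝ L x))
    (E : L) (hE0 : E ∈ g 0) (hEchar : ∀ p : ℤ, ∀ x ∈ g p, ⁅E, x⁆ = (p : ℝ) • x)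
    (𝔞 : Submodule ℝ L) (h𝔞0 : 𝔞 ≤ g 0) (hE𝔞 : E ∈ 𝔞)
    (h𝔞ab : ∀ a ∈ 𝔞, ∀ b ∈ 𝔞, ⁅a, b⁆ = 0)
    (k : ℕ) (lam : Fin k → (↥𝔞 →ₗ[ℝ] ℝ)) (W : Fin k → Submodule ℝ ↥(g (-1)))
    (hW : ∀ i : Fin k, ∀ v : ↥(g (-1)),
      v ∈ W i ↔ ∀ A : ↥𝔞, ⁅(A : L), (v : L)⁆ = lam i A • (v : L))
    (hdec : DirectSum.IsInternal W) :
    Module.finrank ℝ ↥𝔞 ≤ min r s + 1 := by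
    classical
  haveI hfd : FiniteDimensional ℝ ↥(g (-1)) := hnegfin (-1) (by norm_num)
  obtain ⟨P, N, hPN, hPNsup, hrP, hsN, hPNorth, hPpos, hNneg⟩ := hsig
  have hPle : P ≤ g (-1) := le_sup_left.trans hPNsup.le
  have hNle : N ≤ g (-1) := le_sup_right.trans hPNsup.le
  haveI : FiniteDimensional ℝ ↥P := Submodule.finiteDimensional_of_le hPle
  haveI : FiniteDimensional ℝ ↥N := Submodule.finiteDimensional_of_le hNle
  -- a base point with `B x₀ x₀ ≠ 0`
  obtain ⟨x₀, hx₀mem, hx₀⟩ : ∃ x₀, x₀ ∈ g (-1) ∧ B x₀ x₀ ≠ 0 := by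
    rcases eq_or_ne P ⊥ with hP | hP
    · rcases eq_or_ne N ⊥ with hN | hN
      · exact absurd (by rw [← hPNsup, hP, hN, bot_sup_eq]) hfund.1
      · obtain ⟨x, hxN, hx0⟩ := Submodule.exists_mem_ne_zero_of_ne_bot hN
        exact ⟨x, hNle hxN, ne_of_lt (hNneg x hxN hx0)⟩
    · obtain ⟨x, hxP, hx0⟩ := Submodule.exists_mem_ne_zero_of_ne_bot hP
      exact ⟨x, hPle hxP, (ne_of_lt (hPpos x hxP hx0)).symm⟩
  -- the conformal factor, as a linear functional on 𝔞
  set η : ↥𝔞 →ₗ[ℝ] ℝ :=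
    { toFun := fun A => (B ⁅(A : L), x₀⁆ x₀ + B x₀ ⁅(A : L), x₀⁆) / B x₀ x₀
      map_add' := by
        intro A A'
        simp only [Submodule.coe_add, add_lie, lie_add, map_add, LinearMap.add_apply]
        ring
      map_smul' := by
        intro c A
        simp only [SetLike.val_smul, smul_lie, lie_smul, map_smul, LinearMap.smul_apply,
          smul_eq_mul, RingHom.id_apply]
        ring } with hηdef
  have ηeq : ∀ A : ↥𝔞, ∀ x ∈ g (-1), ∀ y ∈ g (-1),
      B ⁅(A : L), x⁆ y + B x ⁅(A : L), y⁆ = η A * B x y := by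
    intro A x hx y hy
    obtain ⟨c, hc⟩ := had (A : L) (h𝔞0 A.2)
    have hc' : ∀ u ∈ g (-1), ∀ v ∈ g (-1),
        B ⁅(A : L), u⁆ v + B u ⁅(A : L), v⁆ = c * B u v := by
      intro u hu v hv
      simpa [LieAlgebra.ad_apply] using hc u hu v hv
    have h0 := hc' x₀ hx₀mem x₀ hx₀mem
    have hA : η A = c := by
      show (B ⁅(A : L), x₀⁆ x₀ + B x₀ ⁅(A : L), x₀⁆) / B x₀ x₀ = c
      rw [h0, mul_div_assoc, div_self hx₀, mul_one]
    rw [hA]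
    exact hc' x hx y hy
  -- shifted weights
  set μ : Fin k → (↥𝔞 →ₗ[ℝ] ℝ) := fun i => lam i - (2⁻¹ : ℝ) • η with hμdef
  have hμapp : ∀ (i : Fin k) (A : ↥𝔞), μ i A = lam i A - 2⁻¹ * η A := by
    intro i A; simp [hμdef]
  -- the key orthogonality relation
  have hBzero : ∀ (i j : Fin k) (x y : ↥(g (-1))), x ∈ W i → y ∈ W j →
      μ i + μ j ≠ 0 → B (x : L) (y : L) = 0 := by
    intro i j x y hx hy hne
    obtain ⟨A, hA⟩ : ∃ A : ↥𝔞, μ i A + μ j A ≠ 0 := by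
      by_contra h
      push_neg at h
      exact hne (LinearMap.ext fun A => by simpa using h A)
    have h1 := ηeq A (x : L) x.2 (y : L) y.2
    rw [(hW i x).1 hx A, (hW j y).1 hy A] at h1
    simp only [map_smul, LinearMap.smul_apply, smul_eq_mul] at h1
    have h2 : (lam i A + lam j A - η A) * B (x : L) (y : L) = 0 := by ring_nf; linarith
    have h3 : lam i A + lam j A - η A ≠ 0 := by
      intro h
      apply hA
      rw [hμapp, hμapp]
      linarith
    exact (mul_eq_zero.1 h2).resolve_left h3
  -- the set of chosen representatives of pairs {μ, -μ} of nonzero weights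
  set T : Finset (Fin k) := Finset.univ.filter
      (fun i => W i ≠ ⊥ ∧ μ i ≠ 0 ∧
        ∀ j, j < i → ¬(W j ≠ ⊥ ∧ (μ j = μ i ∨ μ j = -μ i))) with hTdef
  have hTmem : ∀ i, i ∈ T ↔ (W i ≠ ⊥ ∧ μ i ≠ 0 ∧
      ∀ j, j < i → ¬(W j ≠ ⊥ ∧ (μ j = μ i ∨ μ j = -μ i))) := by
    intro i; rw [hTdef]; simp only [Finset.mem_filter, Finset.mem_univ, true_and]
  -- every nonzero weight with nonzero eigenspace is covered by T up to sign
  have hcover : ∀ j : Fin k, W j ≠ ⊥ → μ j ≠ 0 → ∃ i ∈ T, μ i = μ j ∨ μ i = -μ j := by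
    intro j hWj hμj
    set S : Finset (Fin k) :=
      Finset.univ.filter (fun i => W i ≠ ⊥ ∧ (μ i = μ j ∨ μ i = -μ j)) with hSdef
    have hSmem : ∀ i, i ∈ S ↔ (W i ≠ ⊥ ∧ (μ i = μ j ∨ μ i = -μ j)) := by
      intro i; rw [hSdef]; simp only [Finset.mem_filter, Finset.mem_univ, true_and]
    have hSne : S.Nonempty := ⟨j, (hSmem j).2 ⟨hWj, Or.inl rfl⟩⟩
    obtain ⟨hiW, hicase⟩ := (hSmem _).1 (S.min'_mem hSne)
    refine ⟨S.min' hSne, (hTmem _).2 ⟨hiW, ?_, ?_⟩, hicase⟩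
    · rcases hicase with h | h
      · rw [h]; exact hμj
      · rw [h]; exact neg_ne_zero.2 hμj
    · intro j' hj' hcontra
      obtain ⟨hWj', hcase⟩ := hcontra
      have hj'S : j' ∈ S := by
        refine (hSmem j').2 ⟨hWj', ?_⟩
        rcases hcase with h1 | h1 <;> rcases hicase with h2 | h2
        · exact Or.inl (h1.trans h2)
        · exact Or.inr (h1.trans h2)
        · exact Or.inr (by rw [h1, h2])
        · exact Or.inl (by rw [h1, h2, neg_neg])
      exact absurd (S.min'_le _ hj'S) (not_le.2 hj')
  -- distinct elements of T have non-opposite weights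
  have hTsep : ∀ i ∈ T, ∀ i' ∈ T, μ i + μ i' ≠ 0 := by
    intro i hi i' hi' hsum
    have hμi : μ i = -μ i' := by
      have h' := congrArg (fun f => f - μ i') hsum
      simpa [add_sub_cancel_right] using h'
    rw [hTmem] at hi hi'
    rcases lt_trichotomy i i' with h | h | h
    · exact hi'.2.2 i h ⟨hi.1, Or.inr hμi⟩
    · subst h
      apply hi.2.1
      ext A
      have h2 := congrArg (fun f : ↥𝔞 →ₗ[ℝ] ℝ => f A) hμi
      simp only [LinearMap.neg_apply] at h2
      simpa using by linarith
    · exact hi.2.2 i' h ⟨hi'.1, Or.inr (by rw [hμi, neg_neg])⟩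
  -- choose eigenvectors
  have hxv : ∀ i : Fin k, ∃ v : ↥(g (-1)), v ∈ W i ∧ (W i ≠ ⊥ → v ≠ 0) := by
    intro i
    rcases eq_or_ne (W i) ⊥ with h | h
    · exact ⟨0, zero_mem _, fun h' => absurd h h'⟩
    · obtain ⟨v, hv, hv0⟩ := Submodule.exists_mem_ne_zero_of_ne_bot h
      exact ⟨v, hv, fun _ => hv0⟩
  choose xv hxvW hxv0 using hxv
  have hTne : ∀ i ∈ T, W i ≠ ⊥ := fun i hi => ((hTmem i).1 hi).1
  have hBx : ∀ i ∈ T, ∀ i' ∈ T, B ((xv i : ↥(g (-1))) : L) ((xv i' : ↥(g (-1))) : L) = 0 :=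
    fun i hi i' hi' => hBzero i i' _ _ (hxvW i) (hxvW i') (hTsep i hi i' hi')
  -- linear independence of the chosen eigenvectors
  have hind : LinearIndependent ℝ (fun i : ↥T => xv (i : Fin k)) := by
    have h1 : iSupIndep (fun i : ↥T => W (i : Fin k)) :=
      hdec.submodule_iSupIndep.comp Subtype.coe_injective
    exact iSupIndep.linearIndependent _ h1 (fun i => hxvW _) (fun i => hxv0 _ (hTne _ i.2))
  -- decompose into P and N parts
  have hxPN : ∀ i : Fin k, ∃ p n : L, p ∈ P ∧ n ∈ N ∧ ((xv i : ↥(g (-1))) : L) = p + n := by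
    intro i
    have hmem : ((xv i : ↥(g (-1))) : L) ∈ P ⊔ N := by rw [hPNsup]; exact (xv i).2
    rcases Submodule.mem_sup.1 hmem with ⟨p, hp, n, hn, hpn⟩
    exact ⟨p, n, hp, hn, hpn.symm⟩
  choose pv nv hpv hnv hpnv using hxPN
  -- isotropy of linear combinations of the chosen eigenvectors
  have hiso : ∀ c : ↥T → ℝ,
      B (∑ i : ↥T, c i • ((xv (i : Fin k) : ↥(g (-1))) : L))
        (∑ i : ↥T, c i • ((xv (i : Fin k) : ↥(g (-1))) : L)) = 0 := by
    intro c
    simp only [map_sum, map_smul, LinearMap.sum_apply, LinearMap.smul_apply, smul_eq_mul]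
    refine Finset.sum_eq_zero fun i _ => ?_
    refine mul_eq_zero_of_right _ (Finset.sum_eq_zero fun j _ => ?_)
    rw [hBx _ j.2 _ i.2, mul_zero]
  -- from vanishing of one component, all coefficients vanish
  have hkey : ∀ (c : ↥T → ℝ),
      ((∑ i : ↥T, c i • pv (i : Fin k) = 0) ∨ (∑ i : ↥T, c i • nv (i : Fin k) = 0)) →
      ∀ i, c i = 0 := by
    intro c hc
    have hsum : (((∑ i : ↥T, c i • xv (i : Fin k) : ↥(g (-1))) : L))
        = (∑ i : ↥T, c i • pv (i : Fin k)) + (∑ i : ↥T, c i • nv (i : Fin k)) := by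
      rw [Submodule.coe_sum, ← Finset.sum_add_distrib]
      refine Finset.sum_congr rfl fun i _ => ?_
      rw [SetLike.val_smul, ← smul_add, ← hpnv]
    have hBzero' : B ((∑ i : ↥T, c i • xv (i : Fin k) : ↥(g (-1))) : L)
        ((∑ i : ↥T, c i • xv (i : Fin k) : ↥(g (-1))) : L) = 0 := by
      have hcoe : (((∑ i : ↥T, c i • xv (i : Fin k) : ↥(g (-1))) : L))
          = ∑ i : ↥T, c i • ((xv (i : Fin k) : ↥(g (-1))) : L) := by
        rw [Submodule.coe_sum]
        refine Finset.sum_congr rfl fun i _ => ?_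
        rw [SetLike.val_smul]
      rw [hcoe]; exact hiso c
    have hu0 : (∑ i : ↥T, c i • xv (i : Fin k) : ↥(g (-1))) = 0 := by
      rcases hc with h | h
      · -- the combination lies in N
        have hmemN : (((∑ i : ↥T, c i • xv (i : Fin k) : ↥(g (-1))) : L)) ∈ N := by
          rw [hsum, h, zero_add]
          exact Submodule.sum_mem _ fun i _ => Submodule.smul_mem _ _ (hnv _)
        by_contra h0
        have hL : (((∑ i : ↥T, c i • xv (i : Fin k) : ↥(g (-1))) : L)) ≠ 0 :=
          fun h' => h0 (Subtype.ext h')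
        exact absurd hBzero' (ne_of_lt (hNneg _ hmemN hL))
      · have hmemP : (((∑ i : ↥T, c i • xv (i : Fin k) : ↥(g (-1))) : L)) ∈ P := by
          rw [hsum, h, add_zero]
          exact Submodule.sum_mem _ fun i _ => Submodule.smul_mem _ _ (hpv _)
        by_contra h0
        have hL : (((∑ i : ↥T, c i • xv (i : Fin k) : ↥(g (-1))) : L)) ≠ 0 :=
          fun h' => h0 (Subtype.ext h')
        exact absurd hBzero' (ne_of_gt (hPpos _ hmemP hL))
    exact Fintype.linearIndependent_iff.1 hind c hu0
  -- card T ≤ r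
  have hcardr : T.card ≤ r := by
    rw [← hrP, ← Fintype.card_coe]
    have hli : LinearIndependent ℝ (fun i : ↥T => (⟨pv (i : Fin k), hpv _⟩ : ↥P)) := by
      rw [Fintype.linearIndependent_iff]
      intro c hc
      refine hkey c (Or.inl ?_)
      have := congrArg (Submodule.subtype P) hc
      simpa using this
    exact hli.fintype_card_le_finrank
  -- card T ≤ s
  have hcards : T.card ≤ s := by
    rw [← hsN, ← Fintype.card_coe]
    have hli : LinearIndependent ℝ (fun i : ↥T => (⟨nv (i : Fin k), hnv _⟩ : ↥N)) := by
      rw [Fintype.linearIndependent_iff]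
      intro c hc
      refine hkey c (Or.inr ?_)
      have := congrArg (Submodule.subtype N) hc
      simpa using this
    exact hli.fintype_card_le_finrank
  -- the injective linear map from 𝔞
  set Φ : ↥𝔞 →ₗ[ℝ] (↥T → ℝ) × ℝ :=
    LinearMap.prod (LinearMap.pi fun i : ↥T => μ (i : Fin k)) η with hΦdef
  have hΦinj : Function.Injective Φ := by
    rw [← LinearMap.ker_eq_bot, Submodule.eq_bot_iff]
    intro A hA
    rw [LinearMap.mem_ker] at hA
    have hμT : ∀ i : ↥T, μ (i : Fin k) A = 0 := by
      intro i
      have := congrFun (congrArg Prod.fst hA) i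
      simpa [hΦdef] using this
    have hηA : η A = 0 := by
      have := congrArg Prod.snd hA
      simpa [hΦdef] using this
    have hlam : ∀ j : Fin k, W j ≠ ⊥ → lam j A = 0 := by
      intro j hWj
      have hμA : μ j A = 0 := by
        rcases eq_or_ne (μ j) 0 with h | h
        · rw [h]; rfl
        · obtain ⟨i, hiT, hcase⟩ := hcover j hWj h
          rcases hcase with h' | h'
          · rw [← h']; exact hμT ⟨i, hiT⟩
          · have h2 := hμT ⟨i, hiT⟩
            rw [h'] at h2
            simpa using h2
      have := hμapp j A
      rw [hμA, hηA] at this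
      linarith [this]
    have hbr : ∀ y ∈ g (-1), ⁅(A : L), y⁆ = 0 := by
      intro y hy
      have hy' : (⟨y, hy⟩ : ↥(g (-1))) ∈ ⨆ i, W i := by
        rw [hdec.submodule_iSup_eq_top]; trivial
      have hind' : ∀ v : ↥(g (-1)), v ∈ ⨆ i, W i → ⁅(A : L), (v : L)⁆ = 0 := by
        intro v hv
        refine Submodule.iSup_induction (motive := fun v : ↥(g (-1)) => ⁅(A : L), (v : L)⁆ = 0)
          W hv ?_ ?_ ?_
        · intro i x hx
          rcases eq_or_ne (W i) ⊥ with hb | hb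
          · rw [hb, Submodule.mem_bot] at hx
            rw [hx]; simp
          · rw [(hW i x).1 hx A, hlam i hb]
            simp
        · simp
        · intro x y hx hy
          push_cast
          rw [lie_add, hx, hy, add_zero]
      exact hind' ⟨y, hy⟩ hy'
    have hA0 : (A : L) = 0 := htr 0 le_rfl (A : L) (h𝔞0 A.2) hbr
    exact Subtype.ext hA0
  have hfin : Module.finrank ℝ ↥𝔞 ≤ Module.finrank ℝ ((↥T → ℝ) × ℝ) :=
    LinearMap.finrank_le_finrank_of_injective hΦinj
  have hcod : Module.finrank ℝ ((↥T → ℝ) × ℝ) = T.card + 1 := by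
    rw [Module.finrank_prod, Module.finrank_pi, Module.finrank_self, Fintype.card_coe]
  rw [hcod] at hfin
  exact hfin.trans (Nat.add_le_add_right (le_min hcardr hcards) 1)
end

section
/- Let 𝔤 = ⊕_{p∈ℤ}𝔤_p be a transitive GLA over ℝ, and let I be an ideal of 𝔤 that is graded, i.e., I = ⊕_{p∈ℤ}(I ∩ 𝔤_p). If I ∩ 𝔤_p = 0 for every p < 0, then I = 0. -/
open scoped TensorProduct

/-- In a transitive GLA over `ℝ`, a graded ideal whose intersections with
all negative graded pieces vanish must be the zero ideal. -/
theorem graded_ideal_trivial_of_neg_trivial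
    {L : Type*} [LieRing L] [LieAlgebra ℝ L]
    (g : ℤ → Submodule ℝ L) (hg : IsGLA g) (htr : IsTransitiveGLA g)
    (I : LieIdeal ℝ L)
    (hgraded : (I : Submodule ℝ L) = ⨆ p : ℤ, ((I : Submodule ℝ L) ⊓ g p))
    (hneg : ∀ p : ℤ, p < 0 → (I : Submodule ℝ L) ⊓ g p = ⊥) :
    I = ⊥ := by
  obtain ⟨hint, hbr⟩ := hg
  have step : ∀ p : ℤ, 0 ≤ p → (I : Submodule ℝ L) ⊓ g (p - 1) = ⊥ →
      (I : Submodule ℝ L) ⊓ g p = ⊥ := by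
    intro p hp hprev
    rw [eq_bot_iff]
    rintro x ⟨hxI, hxg⟩
    have hx0 : x = 0 := by
      refine htr p hp x hxg ?_
      intro y hy
      have hmem : ⁅x, y⁆ ∈ (I : Submodule ℝ L) ⊓ g (p - 1) := by
        constructor
        · rw [← lie_skew]
          exact neg_mem (I.lie_mem hxI)
        · have := hbr p (-1) x hxg y hy
          rwa [← sub_eq_add_neg] at this
      rw [hprev] at hmem
      simpa using hmem
    exact (Submodule.mem_bot ℝ).mpr hx0
  have key : ∀ p : ℤ, (I : Submodule ℝ L) ⊓ g p = ⊥ := by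
    have hnn : ∀ n : ℕ, (I : Submodule ℝ L) ⊓ g n = ⊥ := by
      intro n
      induction n with
      | zero => exact step 0 le_rfl (by simpa using hneg (-1) (by norm_num))
      | succ m ih =>
        have : ((m : ℤ) + 1) - 1 = (m : ℤ) := by ring
        exact step (m + 1) (by positivity) (by rw [this]; exact_mod_cast ih)
    intro p
    rcases lt_or_ge p 0 with h | h
    · exact hneg p h
    · obtain ⟨n, rfl⟩ := Int.eq_ofNat_of_zero_le h
      exact hnn n
  have : (I : Submodule ℝ L) = ⊥ := by
    rw [hgraded]
    exact iSup_eq_bot.mpr key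
  exact (LieSubmodule.toSubmodule_eq_bot I).mp this
end

section
/- Let 𝔤 = ⊕_{p∈ℤ}𝔤_p be a finite-dimensional transitive GLA over ℝ, and let 𝔩 be a Lie subalgebra of 𝔤 that is graded (𝔩 = ⊕_{p∈ℤ}(𝔩 ∩ 𝔤_p)) and satisfies 𝔩 ∩ 𝔤_p = 𝔤_p for every p < 0. If 𝔩 is a semisimple Lie algebra, then 𝔤 is semisimple (its radical is zero). -/
open scoped TensorProduct

section Aux
open DirectSum
variable {L : Type*} [LieRing L] [LieAlgebra ℝ L] (g : ℤ → Submodule ℝ L)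
  [DirectSum.Decomposition g]

noncomputable def gmap (t : ℝ) : L →ₗ[ℝ] L :=
  (DirectSum.toModule ℝ ℤ L fun p => t ^ p • (g p).subtype) ∘ₗ
    (DirectSum.decomposeLinearEquiv g).toLinearMap

lemma gmap_of_mem (t : ℝ) {p : ℤ} {x : L} (hx : x ∈ g p) :
    gmap g t x = t ^ p • x := by
  unfold gmap
  simp only [LinearMap.comp_apply, LinearEquiv.coe_toLinearMap,
    DirectSum.decomposeLinearEquiv_apply]
  rw [DirectSum.decompose_of_mem g hx, ← DirectSum.lof_eq_of ℝ, DirectSum.toModule_lof]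
  simp

lemma gmap_decompose (t : ℝ) (x : L) (p : ℤ) :
    ((DirectSum.decompose g (gmap g t x) p : L)) = t ^ p • (DirectSum.decompose g x p : L) := by
  induction x using DirectSum.Decomposition.inductionOn g with
  | zero => simp
  | @homogeneous i m =>
      rw [gmap_of_mem g t m.2]
      by_cases h : i = p
      · subst h
        rw [DirectSum.decompose_of_mem_same g (Submodule.smul_mem _ _ m.2),
          DirectSum.decompose_of_mem_same g m.2]
      · rw [DirectSum.decompose_of_mem_ne g (Submodule.smul_mem _ _ m.2) h,
          DirectSum.decompose_of_mem_ne g m.2 h]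
        simp
  | add a b ha hb =>
      rw [map_add, DirectSum.decompose_add, DirectSum.add_apply, DirectSum.decompose_add,
        DirectSum.add_apply]
      push_cast [Submodule.coe_add]
      rw [ha, hb, smul_add]

lemma gmap_lie (t : ℝ) (ht : t ≠ 0)
    (hbr : ∀ p q : ℤ, ∀ x ∈ g p, ∀ y ∈ g q, ⁅x, y⁆ ∈ g (p + q)) (x y : L) :
    gmap g t ⁅x, y⁆ = ⁅gmap g t x, gmap g t y⁆ := by
  induction x using DirectSum.Decomposition.inductionOn g with
  | zero => simp
  | @homogeneous i m =>
      induction y using DirectSum.Decomposition.inductionOn g with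
      | zero => simp
      | @homogeneous j m' =>
          rw [gmap_of_mem g t m.2, gmap_of_mem g t m'.2,
            gmap_of_mem g t (hbr i j _ m.2 _ m'.2), smul_lie, lie_smul, smul_smul,
            ← zpow_add₀ ht]
      | add a b ha hb => rw [lie_add, map_add, ha, hb, map_add, lie_add]
  | add a b ha hb => rw [add_lie, map_add, ha, hb, map_add, add_lie]

lemma gmap_gmap (t : ℝ) (ht : t ≠ 0) (x : L) : gmap g t⁻¹ (gmap g t x) = x := by
  induction x using DirectSum.Decomposition.inductionOn g with
  | zero => simp
  | @homogeneous i m =>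
      rw [gmap_of_mem g t m.2, gmap_of_mem g t⁻¹ (Submodule.smul_mem _ _ m.2), smul_smul,
        inv_zpow, inv_mul_cancel₀ (zpow_ne_zero _ ht), one_smul]
  | add a b ha hb => rw [map_add, map_add, ha, hb]

end Aux

/-- Let `𝔤` be a finite-dimensional transitive GLA over `ℝ` and `𝔩` a
graded Lie subalgebra with `𝔩 ∩ 𝔤_p = 𝔤_p` for all `p < 0`. If `𝔩` is semisimple then
`𝔤` is semisimple: its radical is zero. -/
theorem semisimple_of_graded_semisimple_subalgebra
    {L : Type*} [LieRing L] [LieAlgebra ℝ L] [FiniteDimensional ℝ L]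
    (g : ℤ → Submodule ℝ L) (hg : IsGLA g) (htr : IsTransitiveGLA g)
    (l : LieSubalgebra ℝ L)
    (hgraded : (l : Submodule ℝ L) = ⨆ p : ℤ, ((l : Submodule ℝ L) ⊓ g p))
    (hneg : ∀ p : ℤ, p < 0 → (l : Submodule ℝ L) ⊓ g p = g p)
    (hss : LieAlgebra.IsSemisimple ℝ ↥l) :
    LieAlgebra.radical ℝ L = ⊥ := by
  classical
  letI : DirectSum.Decomposition g := hg.1.chooseDecomposition
  haveI := hss
  set R := LieAlgebra.radical ℝ L with hR
  -- invariance of the radical under the grading automorphisms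
  have hsig : ∀ t : ℝ, t ≠ 0 → ∀ x ∈ R, gmap g t x ∈ R := by
    intro t ht x hx
    have hrev : ∀ y : L, gmap g t (gmap g t⁻¹ y) = y := by
      intro y
      have h := gmap_gmap g t⁻¹ (inv_ne_zero ht) y
      rwa [inv_inv] at h
    let J : LieIdeal ℝ L :=
      { Submodule.map (gmap g t) (R : Submodule ℝ L) with
        lie_mem := by
          rintro y m ⟨z, hz, rfl⟩
          refine ⟨⁅gmap g t⁻¹ y, z⁆, LieSubmodule.lie_mem R hz, ?_⟩
          rw [gmap_lie g t ht hg.2, hrev y] }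
    have hJ : ∀ w : L, w ∈ J ↔ w ∈ Submodule.map (gmap g t) (R : Submodule ℝ L) :=
      fun w => Iff.rfl
    haveI : LieAlgebra.IsSolvable J := by
      let f : R →ₗ⁅ℝ⁆ J :=
        { toFun := fun z => ⟨gmap g t z, (hJ _).2 ⟨z, z.2, rfl⟩⟩
          map_add' := by intro a b; ext; simp
          map_smul' := by intro c a; ext; simp
          map_lie' := by
            intro a b
            ext
            simp only [LieIdeal.coe_bracket_of_module]
            exact (gmap_lie g t ht hg.2 _ _) }
      have hsurj : Function.Surjective f := by
        rintro ⟨w, hw⟩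
        obtain ⟨z, hz, rfl⟩ := (hJ w).1 hw
        exact ⟨⟨z, hz⟩, rfl⟩
      exact hsurj.lieAlgebra_isSolvable
    have hle : J ≤ R := (LieAlgebra.LieIdeal.solvable_iff_le_radical ℝ L J).1 inferInstance
    exact hle ((hJ _).2 ⟨x, hx, rfl⟩)
  -- components of radical elements lie in the radical
  have hcomp : ∀ x ∈ R, ∀ p : ℤ, ((DirectSum.decompose g x p : L)) ∈ R := by
    suffices h : ∀ n : ℕ, ∀ x ∈ R, (DirectSum.decompose g x).support.card ≤ n →
        ∀ p : ℤ, ((DirectSum.decompose g x p : L)) ∈ R by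
      exact fun x hx p => h _ x hx le_rfl p
    intro n
    induction n with
    | zero =>
        intro x hx hcard p
        have h0 : (DirectSum.decompose g x).support = ∅ := by
          simpa using Nat.le_antisymm hcard (Nat.zero_le _)
        have : DirectSum.decompose g x p = 0 := by
          by_contra hne
          exact absurd (DFinsupp.mem_support_iff.2 hne) (by simp [h0])
        rw [this]; simpa using R.zero_mem
    | succ n ih =>
        intro x hx hcard p
        by_cases hp : DirectSum.decompose g x p = 0
        · rw [hp]; simpa using R.zero_mem
        have hpS : p ∈ (DirectSum.decompose g x).support := DFinsupp.mem_support_iff.2 hp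
        by_cases hone : ∀ q ∈ (DirectSum.decompose g x).support, q = p
        · have hx' : (∑ i ∈ (DirectSum.decompose g x).support,
              ((DirectSum.decompose g x i : L))) = x := DirectSum.sum_support_decompose g x
          have hsum : (∑ i ∈ (DirectSum.decompose g x).support,
              ((DirectSum.decompose g x i : L))) = (DirectSum.decompose g x p : L) :=
            Finset.sum_eq_single_of_mem p hpS (fun q hq hqp => absurd (hone q hq) hqp)
          rw [← hsum, hx']; exact hx
        · push_neg at hone
          obtain ⟨q, hqS, hqp⟩ := hone
          set y := gmap g (2 : ℝ) x - (2 : ℝ) ^ q • x with hy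
          have hyR : y ∈ R := by
            exact R.toSubmodule.sub_mem (hsig 2 two_ne_zero x hx) (R.toSubmodule.smul_mem _ hx)
          have hyc : ∀ s : ℤ, ((DirectSum.decompose g y s : L)) =
              ((2 : ℝ) ^ s - (2 : ℝ) ^ q) • ((DirectSum.decompose g x s : L)) := by
            intro s
            rw [hy, DirectSum.decompose_sub, DirectSum.sub_apply, DirectSum.decompose_smul,
              DirectSum.smul_apply, Submodule.coe_sub, Submodule.coe_smul,
              gmap_decompose g 2 x s, sub_smul]
          have hsupp : (DirectSum.decompose g y).support ⊆
              (DirectSum.decompose g x).support.erase q := by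
            intro s hs
            have hs' : DirectSum.decompose g y s ≠ 0 := DFinsupp.mem_support_iff.1 hs
            rw [Finset.mem_erase]
            constructor
            · rintro rfl
              apply hs'
              have := hyc s
              rw [sub_self, zero_smul] at this
              exact Subtype.ext this
            · rw [DFinsupp.mem_support_iff]
              intro h0
              apply hs'
              have := hyc s
              rw [h0] at this
              simp only [ZeroMemClass.coe_zero, smul_zero] at this
              exact Subtype.ext this
          have hcard' : (DirectSum.decompose g y).support.card ≤ n := by
            have h1 := Finset.card_le_card hsupp
            rw [Finset.card_erase_of_mem hqS] at h1
            omega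
          have hkey := ih y hyR hcard' p
          rw [hyc p] at hkey
          have hne : (2 : ℝ) ^ p - (2 : ℝ) ^ q ≠ 0 := by
            rw [sub_ne_zero]
            intro h
            exact hqp (zpow_right_injective₀ (by norm_num) (by norm_num) h).symm
          have heq : ((DirectSum.decompose g x p : L)) =
              ((2 : ℝ) ^ p - (2 : ℝ) ^ q)⁻¹ •
                (((2 : ℝ) ^ p - (2 : ℝ) ^ q) • ((DirectSum.decompose g x p : L))) := by
            rw [smul_smul, inv_mul_cancel₀ hne, one_smul]
          rw [heq]
          exact R.toSubmodule.smul_mem _ hkey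
  -- negative homogeneous elements of the radical vanish
  have hnegzero : ∀ p : ℤ, p < 0 → ∀ x ∈ R, x ∈ g p → x = 0 := by
    intro p hplt x hxR hxg
    have hgl : g p ≤ (l : Submodule ℝ L) := by
      rw [← hneg p hplt]; exact inf_le_left
    have hxl : x ∈ l := hgl hxg
    let I : LieIdeal ℝ ↥l :=
      { Submodule.comap (l : Submodule ℝ L).subtype (R : Submodule ℝ L) with
        lie_mem := by
          intro z m hm
          show ((⁅z, m⁆ : ↥l) : L) ∈ (R : Submodule ℝ L)
          rw [LieSubalgebra.coe_bracket]
          exact LieSubmodule.lie_mem R hm }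
    have hI : ∀ w : ↥l, w ∈ I ↔ (w : L) ∈ R := fun w => Iff.rfl
    haveI : LieAlgebra.IsSolvable I := by
      let f : I →ₗ⁅ℝ⁆ R :=
        { toFun := fun z => ⟨(z : ↥l), (hI _).1 z.2⟩
          map_add' := by intro a b; ext; simp
          map_smul' := by intro c a; rfl
          map_lie' := by
            intro a b
            ext
            simp only [LieIdeal.coe_bracket_of_module, LieSubalgebra.coe_bracket]
            rfl }
      have hinj : Function.Injective f := by
        intro a b hab
        have h2 := congrArg Subtype.val hab
        exact Subtype.ext (Subtype.ext h2)
      exact hinj.lieAlgebra_isSolvable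
    have hIbot : I = ⊥ := LieAlgebra.HasTrivialRadical.eq_bot_of_isSolvable I
    have hmem : (⟨x, hxl⟩ : ↥l) ∈ I := (hI _).2 hxR
    rw [hIbot, LieSubmodule.mem_bot] at hmem
    exact congrArg Subtype.val hmem
  -- nonnegative homogeneous elements of the radical vanish, by transitivity
  have hnonneg : ∀ n : ℕ, ∀ x ∈ R, x ∈ g (n : ℤ) → x = 0 := by
    intro n
    induction n with
    | zero =>
        intro x hxR hxg
        refine htr 0 le_rfl x (by simpa using hxg) ?_
        intro y hy
        have hb : ⁅x, y⁆ ∈ g (-1) := by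
          have := hg.2 0 (-1) x (by simpa using hxg) y hy
          simpa using this
        have hbR : ⁅x, y⁆ ∈ R := lie_mem_left ℝ L R x y hxR
        exact hnegzero (-1) (by norm_num) _ hbR hb
    | succ n ih =>
        intro x hxR hxg
        refine htr ((n : ℤ) + 1) (by positivity) x (by push_cast at hxg ⊢; exact hxg) ?_
        intro y hy
        have hb : ⁅x, y⁆ ∈ g (n : ℤ) := by
          have := hg.2 ((n : ℤ) + 1) (-1) x (by push_cast at hxg ⊢; exact hxg) y hy
          simpa using this
        have hbR : ⁅x, y⁆ ∈ R := lie_mem_left ℝ L R x y hxR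
        exact ih _ hbR hb
  -- conclude
  rw [eq_bot_iff]
  intro x hx
  have hzero : ∀ p : ℤ, ((DirectSum.decompose g x p : L)) = 0 := by
    intro p
    have hc := hcomp x hx p
    rcases lt_or_ge p 0 with h | h
    · exact hnegzero p h _ hc (DirectSum.decompose g x p).2
    · obtain ⟨n, rfl⟩ := Int.eq_ofNat_of_zero_le h
      exact hnonneg n _ hc (DirectSum.decompose g x (n : ℤ)).2
  rw [LieSubmodule.mem_bot]
  rw [← DirectSum.sum_support_decompose g x]
  exact Finset.sum_eq_zero fun p _ => hzero p
end

section
/- Let L be a real Lie algebra and V a nonzero finite-dimensional L-module equipped with a nondegenerate symmetric bilinear form g such that for every a ∈ L there exists η_a ∈ ℝ with g(a·v,w) + g(v,a·w) = η_a·g(v,w) for all v,w ∈ V. Suppose V = V₁ ⊕ ⋯ ⊕ V_k, where the V_i are irreducible L-submodules that are pairwise non-isomorphic as L-modules, and suppose that for each i ∈ {1,…,k} there exists E_i ∈ L acting by E_i·v = −v for v ∈ V_i and E_i·v = 0 for v ∈ V_j with j ≠ i. Then either k = 1, or k = 2 with V₁ and V₂ totally isotropic for g and the restriction of g to V₁ ×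 V₂ a nondegenerate pairing. -/
/-- Let `L` be a real Lie algebra and `V` a nonzero finite-dimensional
`L`-module with a nondegenerate symmetric bilinear form `B` on which `L` acts conformally.
If `V` decomposes as a direct sum of pairwise non-isomorphic irreducible `L`-submodules
`W 0, …, W (k-1)` and for each `i` there exists `E i ∈ L` acting by `-1` on `W i` and by
`0` on the other summands, then either `k = 1`, or `k = 2` with both summands totally
isotropic for `B` and `B` a nondegenerate pairing between them. -/
theorem decomposition_of_conformal_module
    {L V : Type*} [LieRing L] [LieAlgebra ℝ L]
    [AddCommGroup V] [Module ℝ V] [LieRingModule L V] [LieModule ℝ L V]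
    [FiniteDimensional ℝ V] [Nontrivial V]
    (B : V →ₗ[ℝ] V →ₗ[ℝ] ℝ)
    (hBsymm : ∀ x y : V, B x y = B y x)
    (hBnd : ∀ x : V, (∀ y : V, B x y = 0) → x = 0)
    (hco : ∀ a : L, ∃ η : ℝ, ∀ v w : V, B ⁅a, v⁆ w + B v ⁅a, w⁆ = η * B v w)
    (k : ℕ) (W : Fin k → LieSubmodule ℝ L V)
    (hdec : DirectSum.IsInternal fun i : Fin k => (W i : Submodule ℝ V))
    (hirr : ∀ i : Fin k, LieModule.IsIrreducible ℝ L ↥(W i))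
    (hnoniso : ∀ i j : Fin k, i ≠ j → IsEmpty (↥(W i) ≃ₗ⁅ℝ,L⁆ ↥(W j)))
    (E : Fin k → L)
    (hE : ∀ i : Fin k, (∀ v ∈ W i, ⁅E i, v⁆ = -v) ∧
      ∀ j : Fin k, j ≠ i → ∀ v ∈ W j, ⁅E i, v⁆ = 0) :
    k = 1 ∨ (k = 2 ∧ ∀ i j : Fin k, i ≠ j →
      (∀ x ∈ W i, ∀ y ∈ W i, B x y = 0) ∧
      (∀ x ∈ W i, (∀ y ∈ W j, B x y = 0) → x = 0)) := by
  classical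
  choose η hη using fun i => hco (E i)
  -- Fact 1: on `W i × W i`, `-2 B = η i • B`.
  have f1 : ∀ i : Fin k, ∀ v ∈ W i, ∀ w ∈ W i,
      -(B v w) - B v w = η i * B v w := by
    intro i v hv w hw
    have h := hη i v w
    rw [(hE i).1 v hv, (hE i).1 w hw] at h
    simpa [sub_eq_add_neg] using h
  -- Fact 2: on `W i × W j` (`j ≠ i`), `-B = η i • B`.
  have f2 : ∀ i j : Fin k, j ≠ i → ∀ v ∈ W i, ∀ w ∈ W j,
      -(B v w) = η i * B v w := by
    intro i j hj v hv w hw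
    have h := hη i v w
    rw [(hE i).1 v hv, (hE i).2 j hj w hw] at h
    simpa using h
  -- Fact 3: on `W j × W j'` with `j, j' ≠ i`, `η i • B = 0`.
  have f3 : ∀ i j j' : Fin k, j ≠ i → j' ≠ i → ∀ v ∈ W j, ∀ w ∈ W j',
      η i * B v w = 0 := by
    intro i j j' hj hj' v hv w hw
    have h := hη i v w
    rw [(hE i).2 j hj v hv, (hE i).2 j' hj' w hw] at h
    simpa using h.symm
  -- An element pairing to zero with every summand is zero.
  have hrad : ∀ x : V, (∀ n : Fin k, ∀ y ∈ W n, B x y = 0) → x = 0 := by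
    intro x hx
    apply hBnd
    intro y
    have hy : y ∈ (⨆ i, (W i : Submodule ℝ V)) := by
      rw [hdec.submodule_iSup_eq_top]; trivial
    refine Submodule.iSup_induction (motive := fun z => B x z = 0)
      (fun i => (W i : Submodule ℝ V)) hy (fun n z hz => hx n z hz) (by simp) ?_
    intro a b ha hb
    simp [map_add, ha, hb]
  -- Each summand has a nonzero element.
  have hWne : ∀ i : Fin k, ∃ x ∈ W i, x ≠ (0 : V) := by
    intro i
    haveI := hirr i
    by_contra hc
    push_neg at hc
    apply (bot_ne_top : (⊥ : LieSubmodule ℝ L ↥(W i)) ≠ ⊤)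
    ext z
    simp only [LieSubmodule.mem_bot, LieSubmodule.mem_top, iff_true]
    exact Subtype.ext (hc z.1 z.2)
  -- The conformal weights of the `E i` are nonzero.
  have hηne : ∀ i : Fin k, η i ≠ 0 := by
    intro i h0
    obtain ⟨x, hx, hxne⟩ := hWne i
    apply hxne
    apply hrad
    intro n y hy
    by_cases hn : n = i
    · subst hn
      have h := f1 n x hx y hy
      rw [h0, zero_mul] at h
      linarith
    · have h := f2 i n hn x hx y hy
      rw [h0, zero_mul] at h
      linarith
  -- Hence summands other than `W i` pair to zero among themselves.
  have f3' : ∀ i j j' : Fin k, j ≠ i → j' ≠ i → ∀ v ∈ W j, ∀ w ∈ W j',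
      B v w = 0 := by
    intro i j j' hj hj' v hv w hw
    exact (mul_eq_zero.mp (f3 i j j' hj hj' v hv w hw)).resolve_left (hηne i)
  have hk0 : k ≠ 0 := by
    rintro rfl
    obtain ⟨x, y, hxy⟩ := exists_pair_ne V
    have hx : x = 0 := hrad x (fun n => n.elim0)
    have hy : y = 0 := hrad y (fun n => n.elim0)
    exact hxy (hx.trans hy.symm)
  have hk3 : k < 3 := by
    by_contra h
    push_neg at h
    obtain ⟨x, hx, hxne⟩ := hWne ⟨1, by omega⟩
    apply hxne
    apply hrad
    intro n y hy
    by_cases hn : n = ⟨0, by omega⟩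
    · subst hn
      refine f3' ⟨2, by omega⟩ ⟨1, by omega⟩ ⟨0, by omega⟩ ?_ ?_ x hx y hy <;>
        simp [Fin.ext_iff]
    · refine f3' ⟨0, by omega⟩ ⟨1, by omega⟩ n ?_ hn x hx y hy
      simp [Fin.ext_iff]
  rcases (by omega : k = 1 ∨ k = 2) with hk | hk
  · exact Or.inl hk
  · subst hk
    refine Or.inr ⟨rfl, ?_⟩
    intro i j hij
    have hiso : ∀ x ∈ W i, ∀ y ∈ W i, B x y = 0 :=
      fun x hx y hy => f3' j i i hij hij x hx y hy
    refine ⟨hiso, ?_⟩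
    intro x hx hxy
    apply hrad
    intro n y hy
    by_cases hn : n = i
    · subst hn; exact hiso x hx y hy
    · have hnj : n = j := by
        have h1 := n.isLt; have h2 := i.isLt; have h3 := j.isLt
        have h4 : n.val ≠ i.val := fun h => hn (Fin.ext h)
        have h5 : i.val ≠ j.val := fun h => hij (Fin.ext h)
        exact Fin.ext (by omega)
      subst hnj
      exact hxy y hy
end

section
/- Fix an integer l ≥ 2 and set N = 2l + 1. Let K_m denote the m × m real matrix with (i,j) entry δ_{i,m+1−j} and let S be the N × N real symmetric matrix with block form [[0,0,K_l],[0,1,0],[K_l,0,0]] (blocks of sizes l, 1, l). Let 𝔤 = {X ∈ 𝔤𝔩(N,ℝ) : ᵗX S + S X = 0}. Partition {1,…,N} into I₁ = {1}, I₂ = {2,…,l}, I₃ = {l+1}, I₄ = {l+2,…,2l}, I₅ = {2l+1}, assign weights w(I₁) = 0, w(I₂) = −1, w(I₃) = −2, w(I₄) = −3, w(I₅) = −4, and for k ∈ ℤ let 𝔤_k = {X ∈ 𝔤 : X_{ab} = 0 whenever w(a) − w(b) ≠ k}. Then: (1) 𝔤 is the internal direct sum of the 𝔤_k, ⁅𝔤_j,𝔤_k⁆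 ⊆ 𝔤_{j+k}, and 𝔤_k = 0 for |k| > 3; (2) the negative part 𝔪 = 𝔤_{-3} ⊕ 𝔤_{-2} ⊕ 𝔤_{-1} is an FGLA of the third kind (𝔤_{-3} ≠ 0 and 𝔪 is generated by 𝔤_{-1}); (3) the bilinear form on 𝔤_{-1} defined by g(X,Y) = −(1/2)(X₃₂Y₂₁ + Y₃₂X₂₁), where X₂₁ is the I₂ × I₁ block (a column of length l−1) and X₃₂ is the I₃ × I₂ block (a row of length l−1) of X, is a nondegenerate symmetric real bilinear form of neutral signature (l−1, l−1); and (4) for every A ∈ 𝔤₀, writing A₁₁ for its (1,1) entry, one has g(⁅A,X⁆,Y) + g(X,⁅A,Y⁆) = −A₁₁·g(X,Y) for all X, Y ∈ 𝔤_{-1}; in particular ad(𝔤₀)|𝔤_{-1} ⊆ co(𝔤_{-1},g). -/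
open Matrix

attribute [local instance 100] LieRing.ofAssociativeRing

noncomputable section

/-- The `(2l+1) × (2l+1)` symmetric matrix `S = S_{l,1}` with block form
`[[0,0,K_l],[0,1,0],[K_l,0,0]]`, i.e. the matrix with ones on the antidiagonal. -/
def S18 (l : ℕ) : Matrix (Fin (2*l+1)) (Fin (2*l+1)) ℝ :=
  Matrix.of fun i j => if (i : ℕ) + (j : ℕ) = 2*l then 1 else 0

/-- The weights: `w(I₁) = 0, w(I₂) = -1, w(I₃) = -2, w(I₄) = -3, w(I₅) = -4` for the
partition `I₁ = {1}`, `I₂ = {2,…,l}`, `I₃ = {l+1}`, `I₄ = {l+2,…,2l}`, `I₅ = {2l+1}`. -/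
def w18 (l : ℕ) (a : Fin (2*l+1)) : ℤ :=
  if (a : ℕ) = 0 then 0
  else if (a : ℕ) < l then -1
  else if (a : ℕ) = l then -2
  else if (a : ℕ) < 2*l then -3
  else -4

/-- The real Lie algebra `𝔤 = 𝔰𝔬(l+1, l) = {X ∈ 𝔤𝔩(2l+1, ℝ) : ᵗX S + S X = 0}`. -/
def G18 (l : ℕ) : Submodule ℝ (Matrix (Fin (2*l+1)) (Fin (2*l+1)) ℝ) where
  carrier := {X | Xᵀ * S18 l + S18 l * X = 0}
  add_mem' := by
    rintro X Y hX hY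
    simp only [Set.mem_setOf_eq] at *
    rw [Matrix.transpose_add, Matrix.add_mul, Matrix.mul_add]
    have h1 : Xᵀ * S18 l = -(S18 l * X) := eq_neg_of_add_eq_zero_left hX
    have h2 : Yᵀ * S18 l = -(S18 l * Y) := eq_neg_of_add_eq_zero_left hY
    rw [h1, h2]; abel
  zero_mem' := by simp
  smul_mem' := by
    rintro c X hX
    simp only [Set.mem_setOf_eq] at *
    rw [Matrix.transpose_smul, Matrix.smul_mul, Matrix.mul_smul, ← smul_add, hX, smul_zero]

/-- The graded piece `𝔤_k`: matrices in `𝔤` supported where `w a - w b = k`. -/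
def Gk18 (l : ℕ) (k : ℤ) : Submodule ℝ (Matrix (Fin (2*l+1)) (Fin (2*l+1)) ℝ) where
  carrier := {X | X ∈ G18 l ∧ ∀ a b, w18 l a - w18 l b ≠ k → X a b = 0}
  add_mem' := by
    rintro X Y ⟨hX, hX2⟩ ⟨hY, hY2⟩
    exact ⟨(G18 l).add_mem hX hY,
      fun a b h => by simp [Matrix.add_apply, hX2 a b h, hY2 a b h]⟩
  zero_mem' := ⟨(G18 l).zero_mem, fun a b _ => rfl⟩
  smul_mem' := by
    rintro c X ⟨hX, hX2⟩
    exact ⟨(G18 l).smul_mem c hX,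
      fun a b h => by simp [Matrix.smul_apply, hX2 a b h]⟩

/-- The bilinear form `g(X, Y) = -(1/2)(X₃₂ Y₂₁ + Y₃₂ X₂₁)` on `𝔤₋₁`. -/
def g18 (l : ℕ) (X Y : Matrix (Fin (2*l+1)) (Fin (2*l+1)) ℝ) : ℝ :=
  -(1/2) * ∑ b : Fin (2*l+1),
    if 0 < (b : ℕ) ∧ (b : ℕ) < l then
      X ⟨l, by omega⟩ b * Y b ⟨0, by omega⟩ + Y ⟨l, by omega⟩ b * X b ⟨0, by omega⟩
    else 0


namespace S18aux

variable {l : ℕ}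

def rev (l : ℕ) (a : Fin (2*l+1)) : Fin (2*l+1) := ⟨2*l - a, by omega⟩

@[simp] lemma rev_coe (a : Fin (2*l+1)) : ((rev l a : Fin (2*l+1)) : ℕ) = 2*l - a := Fin.val_mk _

@[simp] lemma rev_rev (a : Fin (2*l+1)) : rev l (rev l a) = a := by
  have := a.isLt; simp [rev, Fin.ext_iff]; omega

lemma tmulS (X : Matrix (Fin (2*l+1)) (Fin (2*l+1)) ℝ) (i j : Fin (2*l+1)) :
    (Xᵀ * S18 l) i j = X (rev l j) i := by
  rw [mul_apply]
  rw [Finset.sum_eq_single (rev l j)]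
  · have := j.isLt
    simp [S18, transpose_apply, rev]; omega
  · intro b _ hb
    have : ¬ ((b:ℕ) + (j:ℕ) = 2*l) := by
      intro h; apply hb; have := b.isLt; have := j.isLt
      simp [rev, Fin.ext_iff]; omega
    simp [S18, transpose_apply, this]
  · simp

lemma smulX (X : Matrix (Fin (2*l+1)) (Fin (2*l+1)) ℝ) (i j : Fin (2*l+1)) :
    (S18 l * X) i j = X (rev l i) j := by
  rw [mul_apply]
  rw [Finset.sum_eq_single (rev l i)]
  · have := i.isLt
    simp [S18, rev]; omega
  · intro b _ hb
    have : ¬ ((i:ℕ) + (b:ℕ) = 2*l) := by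
      intro h; apply hb; have := b.isLt; have := i.isLt
      simp [rev, Fin.ext_iff]; omega
    simp [S18, this]
  · simp

lemma mem_G18_iff (X : Matrix (Fin (2*l+1)) (Fin (2*l+1)) ℝ) :
    X ∈ G18 l ↔ ∀ a b, X a b = - X (rev l b) (rev l a) := by
  have h0 : X ∈ G18 l ↔ ∀ i j, X (rev l j) i + X (rev l i) j = 0 := by
    change Xᵀ * S18 l + S18 l * X = 0 ↔ _
    rw [← Matrix.ext_iff]
    constructor
    · intro h i j; have := h i j; rwa [Matrix.add_apply, tmulS, smulX, Matrix.zero_apply] at this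
    · intro h i j; rw [Matrix.add_apply, tmulS, smulX, Matrix.zero_apply]; exact h i j
  rw [h0]
  constructor
  · intro h a b
    have := h b (rev l a)
    rw [rev_rev] at this
    linarith
  · intro h i j
    rw [h (rev l j) i, rev_rev]
    ring

lemma w_rev (hl : 2 ≤ l) (a : Fin (2*l+1)) : w18 l (rev l a) = -4 - w18 l a := by
  have := a.isLt
  simp only [w18, rev_coe]
  split_ifs <;> omega

lemma w_bounds (a : Fin (2*l+1)) : -4 ≤ w18 l a ∧ w18 l a ≤ 0 := by
  simp only [w18]; split_ifs <;> omega

/-- projection onto shell k -/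
def proj (l : ℕ) (k : ℤ) (X : Matrix (Fin (2*l+1)) (Fin (2*l+1)) ℝ) :
    Matrix (Fin (2*l+1)) (Fin (2*l+1)) ℝ :=
  of fun a b => if w18 l a - w18 l b = k then X a b else 0

lemma proj_mem (hl : 2 ≤ l) {k : ℤ} {X : Matrix (Fin (2*l+1)) (Fin (2*l+1)) ℝ}
    (hX : X ∈ G18 l) : proj l k X ∈ Gk18 l k := by
  constructor
  · rw [mem_G18_iff]
    intro a b
    simp only [proj, of_apply, w_rev hl]
    rw [show (-4 - w18 l b) - (-4 - w18 l a) = w18 l a - w18 l b by ring]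
    split_ifs with h
    · exact (mem_G18_iff X).mp hX a b
    · rw [neg_zero]
  · intro a b h
    simp only [proj, of_apply, if_neg h]

lemma proj_sum (X : Matrix (Fin (2*l+1)) (Fin (2*l+1)) ℝ) :
    ∑ k ∈ Finset.Icc (-4 : ℤ) 4, proj l k X = X := by
  funext a b
  rw [Matrix.sum_apply]
  simp only [proj, of_apply]
  rw [Finset.sum_ite_eq (Finset.Icc (-4:ℤ) 4) (w18 l a - w18 l b) (fun _ => X a b)]
  rw [if_pos]
  have ha := w_bounds (l := l) a; have hb := w_bounds (l := l) b
  rw [Finset.mem_Icc]; omega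

lemma part1_internal (hl : 2 ≤ l) :
    DirectSum.IsInternal (fun k : ℤ => (Gk18 l k).comap (G18 l).subtype) := by
  apply DirectSum.isInternal_submodule_of_iSupIndep_of_iSup_eq_top
  · -- independence
    rw [iSupIndep_def]
    intro i
    rw [Submodule.disjoint_def]
    intro x hxi hxrest
    -- the other pieces vanish on shell i
    have hz : ∀ a b, w18 l a - w18 l b = i → (x : Matrix (Fin (2*l+1)) (Fin (2*l+1)) ℝ) a b = 0 := by
      -- x ∈ sup of Gk j, j ≠ i ≤ the "vanishing on shell i" submodule
      set Z : Submodule ℝ (↥(G18 l)) :=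
        { carrier := {y | ∀ a b, w18 l a - w18 l b = i → (y : Matrix (Fin (2*l+1)) (Fin (2*l+1)) ℝ) a b = 0}
          add_mem' := by intro y z hy hz a b h; simp [Submodule.coe_add, hy a b h, hz a b h]
          zero_mem' := by intro a b _; simp
          smul_mem' := by intro c y hy a b h; simp [hy a b h] } with hZdef
      have hle : (⨆ j, ⨆ (_ : j ≠ i), (Gk18 l j).comap (G18 l).subtype) ≤ Z := by
        apply iSup_le; intro j; apply iSup_le; intro hj
        intro y hy a b hab
        exact hy.2 a b (by rw [hab]; exact fun e => hj e.symm)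
      exact hle hxrest
    have : (x : Matrix (Fin (2*l+1)) (Fin (2*l+1)) ℝ) = 0 := by
      funext a b
      by_cases h : w18 l a - w18 l b = i
      · exact hz a b h
      · exact hxi.2 a b h
    exact Subtype.ext this
  · -- spanning
    rw [eq_top_iff]
    intro x _
    have hx : x = ∑ k ∈ Finset.Icc (-4 : ℤ) 4,
        (⟨proj l k (x : Matrix (Fin (2*l+1)) (Fin (2*l+1)) ℝ),
          (proj_mem hl x.2).1⟩ : ↥(G18 l)) := by
      apply Subtype.ext
      rw [AddSubmonoidClass.coe_finset_sum]
      exact (proj_sum (x : Matrix (Fin (2*l+1)) (Fin (2*l+1)) ℝ)).symm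
    rw [hx]
    apply Submodule.sum_mem
    intro k _
    apply Submodule.mem_iSup_of_mem k
    exact proj_mem hl x.2

lemma part1_bracket (hl : 2 ≤ l) (j k : ℤ) (X : Matrix (Fin (2*l+1)) (Fin (2*l+1)) ℝ)
    (hX : X ∈ Gk18 l j) (Y : Matrix (Fin (2*l+1)) (Fin (2*l+1)) ℝ) (hY : Y ∈ Gk18 l k) :
    ⁅X, Y⁆ ∈ Gk18 l (j + k) := by
  obtain ⟨hXG, hXs⟩ := hX
  obtain ⟨hYG, hYs⟩ := hY
  constructor
  · change (⁅X, Y⁆)ᵀ * S18 l + S18 l * ⁅X, Y⁆ = 0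
    have hX' : Xᵀ * S18 l = -(S18 l * X) := eq_neg_of_add_eq_zero_left hXG
    have hY' : Yᵀ * S18 l = -(S18 l * Y) := eq_neg_of_add_eq_zero_left hYG
    rw [Ring.lie_def, transpose_sub, transpose_mul, transpose_mul]
    rw [sub_mul, mul_sub, Matrix.mul_assoc, Matrix.mul_assoc, hX', hY']
    rw [Matrix.mul_neg, Matrix.mul_neg, ← Matrix.mul_assoc, ← Matrix.mul_assoc, hX', hY']
    rw [Matrix.neg_mul, Matrix.neg_mul]
    rw [Matrix.mul_assoc, Matrix.mul_assoc]
    abel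
  · intro a b h
    rw [Ring.lie_def, Matrix.sub_apply, mul_apply, mul_apply]
    rw [Finset.sum_eq_zero, Finset.sum_eq_zero, sub_zero]
    · intro c _
      by_cases h1 : w18 l a - w18 l c = k
      · rw [hXs c b (by omega), mul_zero]
      · rw [hYs a c h1, zero_mul]
    · intro c _
      by_cases h1 : w18 l a - w18 l c = j
      · rw [hYs c b (by omega), mul_zero]
      · rw [hXs a c h1, zero_mul]

lemma part1_vanish (hl : 2 ≤ l) (k : ℤ) (hk : 3 < |k|) : Gk18 l k = ⊥ := by
  rw [eq_bot_iff]
  intro X hX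
  obtain ⟨hG, hs⟩ := hX
  rw [Submodule.mem_bot]
  funext a b
  have ha := a.isLt; have hb := b.isLt
  rw [Matrix.zero_apply]
  by_cases h : w18 l a - w18 l b = k
  · -- |k| ≥ 4 forces a + b = 2l
    have habs : 3 < k ∨ 3 < -k := by
      rcases abs_cases k with ⟨h1, _⟩ | ⟨h1, _⟩ <;> omega
    have hab : (a : ℕ) + (b : ℕ) = 2*l := by
      simp only [w18] at h
      split_ifs at h <;> omega
    have hrb : rev l b = a := by simp [rev, Fin.ext_iff]; omega
    have hra : rev l a = b := by simp [rev, Fin.ext_iff]; omega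
    have := (mem_G18_iff X).mp hG a b
    rw [hrb, hra] at this
    linarith
  · exact hs a b h

/-- elementary matrix with `1` at `(i,j)` (ℕ-indexed). -/
def Em (l i j : ℕ) : Matrix (Fin (2*l+1)) (Fin (2*l+1)) ℝ :=
  of fun a b => if (a : ℕ) = i ∧ (b : ℕ) = j then 1 else 0

lemma Em_mul (i j j' k : ℕ) (hj : j < 2*l+1) :
    Em l i j * Em l j' k = if j = j' then Em l i k else 0 := by
  funext a b
  rw [mul_apply, Finset.sum_eq_single (⟨j, hj⟩ : Fin (2*l+1))]
  · simp only [Em, of_apply, Fin.val_mk]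
    split_ifs <;> simp_all
  · intro c _ hc
    have hcj : ¬ ((c : ℕ) = j) := fun e => hc (Fin.ext e)
    simp only [Em, of_apply]
    rw [if_neg (fun hp => hcj hp.2), zero_mul]
  · simp

def U18 (l c : ℕ) : Matrix (Fin (2*l+1)) (Fin (2*l+1)) ℝ := Em l c 0 - Em l (2*l) (2*l - c)
def V18 (l c : ℕ) : Matrix (Fin (2*l+1)) (Fin (2*l+1)) ℝ := Em l l c - Em l (2*l - c) l
def T18 (l : ℕ) : Matrix (Fin (2*l+1)) (Fin (2*l+1)) ℝ := Em l l 0 - Em l (2*l) l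

lemma lie_V_U (hl : 2 ≤ l) {c d : ℕ} (hc : 0 < c ∧ c < l) (hd : 0 < d ∧ d < l) :
    ⁅V18 l c, U18 l d⁆ = if c = d then T18 l else 0 := by
  rw [Ring.lie_def, V18, U18, T18]
  rw [sub_mul, sub_mul, mul_sub, mul_sub, mul_sub, mul_sub]
  rw [Em_mul l c d 0 (by omega), Em_mul l c (2*l) (2*l-d) (by omega),
      Em_mul (2*l-c) l d 0 (by omega), Em_mul (2*l-c) l (2*l) (2*l-d) (by omega),
      Em_mul d 0 l c (by omega), Em_mul d 0 (2*l-c) l (by omega),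
      Em_mul (2*l) (2*l-d) l c (by omega), Em_mul (2*l) (2*l-d) (2*l-c) l (by omega)]
  rw [if_neg (show ¬ c = 2*l by omega), if_neg (show ¬ l = d by omega),
      if_neg (show ¬ l = 2*l by omega), if_neg (show ¬ (0:ℕ) = l by omega),
      if_neg (show ¬ (0:ℕ) = 2*l - c by omega), if_neg (show ¬ 2*l - d = l by omega)]
  by_cases h : c = d
  · subst h
    rw [if_pos rfl, if_pos (rfl : 2*l - c = 2*l - c), if_pos rfl]
    abel
  · rw [if_neg h, if_neg (show ¬ 2*l - d = 2*l - c by omega), if_neg h]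
    abel

lemma lie_V_V (hl : 2 ≤ l) {c d : ℕ} (hc : 0 < c ∧ c < l) (hd : 0 < d ∧ d < l) :
    ⁅V18 l c, V18 l d⁆ = Em l (2*l - d) c - Em l (2*l - c) d := by
  rw [Ring.lie_def, V18, V18]
  rw [sub_mul, sub_mul, mul_sub, mul_sub, mul_sub, mul_sub]
  rw [Em_mul l c l d (by omega), Em_mul l c (2*l-d) l (by omega),
      Em_mul (2*l-c) l l d (by omega), Em_mul (2*l-c) l (2*l-d) l (by omega),
      Em_mul l d l c (by omega), Em_mul l d (2*l-c) l (by omega),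
      Em_mul (2*l-d) l l c (by omega), Em_mul (2*l-d) l (2*l-c) l (by omega)]
  rw [if_neg (show ¬ c = l by omega), if_neg (show ¬ c = 2*l - d by omega),
      if_pos (rfl : l = l), if_pos (rfl : l = l),
      if_neg (show ¬ l = 2*l - d by omega), if_neg (show ¬ d = l by omega),
      if_neg (show ¬ d = 2*l - c by omega), if_neg (show ¬ l = 2*l - c by omega)]
  abel

lemma lie_V_T (hl : 2 ≤ l) {c : ℕ} (hc : 0 < c ∧ c < l) :
    ⁅V18 l c, T18 l⁆ = - Em l (2*l - c) 0 + Em l (2*l) c := by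
  rw [Ring.lie_def, V18, T18]
  rw [sub_mul, sub_mul, mul_sub, mul_sub, mul_sub, mul_sub]
  rw [Em_mul l c l 0 (by omega), Em_mul l c (2*l) l (by omega),
      Em_mul (2*l-c) l l 0 (by omega), Em_mul (2*l-c) l (2*l) l (by omega),
      Em_mul l 0 l c (by omega), Em_mul l 0 (2*l-c) l (by omega),
      Em_mul (2*l) l l c (by omega), Em_mul (2*l) l (2*l-c) l (by omega)]
  rw [if_neg (show ¬ c = l by omega), if_neg (show ¬ c = 2*l by omega),
      if_pos (rfl : l = l), if_pos (rfl : l = l),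
      if_neg (show ¬ l = 2*l by omega), if_neg (show ¬ (0:ℕ) = l by omega),
      if_neg (show ¬ (0:ℕ) = 2*l - c by omega), if_neg (show ¬ l = 2*l - c by omega)]
  abel

lemma U18_mem (hl : 2 ≤ l) {c : ℕ} (hc : 0 < c ∧ c < l) : U18 l c ∈ Gk18 l (-1) := by
  constructor
  · rw [mem_G18_iff]
    intro a b
    have ha := a.isLt; have hb := b.isLt
    simp only [U18, Em, Matrix.sub_apply, of_apply, rev_coe]
    split_ifs <;> (try norm_num) <;> omega
  · intro a b h
    have ha := a.isLt; have hb := b.isLt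
    by_contra hne
    apply h
    simp only [U18, Em, Matrix.sub_apply, of_apply] at hne
    split_ifs at hne <;> try norm_num at hne
    all_goals (simp only [w18]; split_ifs <;> omega)

lemma V18_mem (hl : 2 ≤ l) {c : ℕ} (hc : 0 < c ∧ c < l) : V18 l c ∈ Gk18 l (-1) := by
  constructor
  · rw [mem_G18_iff]
    intro a b
    have ha := a.isLt; have hb := b.isLt
    simp only [V18, Em, Matrix.sub_apply, of_apply, rev_coe]
    split_ifs <;> (try norm_num) <;> omega
  · intro a b h
    have ha := a.isLt; have hb := b.isLt
    by_contra hne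
    apply h
    simp only [V18, Em, Matrix.sub_apply, of_apply] at hne
    split_ifs at hne <;> try norm_num at hne
    all_goals (simp only [w18]; split_ifs <;> omega)

lemma sum2_point {n : ℕ} (f : Fin n → Fin n → ℝ) (c0 d0 : Fin n)
    (h : ∀ c d, f c d ≠ 0 → c = c0 ∧ d = d0) :
    (∑ c, ∑ d, f c d) = f c0 d0 := by
  rw [Fintype.sum_eq_single c0 (fun c hc => Finset.sum_eq_zero fun d _ => by
    by_contra hf; exact hc (h c d hf).1)]
  exact Fintype.sum_eq_single d0 fun d hd => by
    by_contra hf; exact hd (h c0 d hf).2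

lemma sum1_point {n : ℕ} (f : Fin n → ℝ) (c0 : Fin n)
    (h : ∀ c, f c ≠ 0 → c = c0) : (∑ c, f c) = f c0 :=
  Fintype.sum_eq_single c0 fun c hc => by by_contra hf; exact hc (h c hf)

lemma ite_matrix_apply {n : ℕ} (P : Prop) [Decidable P]
    (M N : Matrix (Fin n) (Fin n) ℝ) (a b : Fin n) :
    (if P then M else N) a b = if P then M a b else N a b := by split_ifs <;> rfl

lemma ite_sub_zero (P : Prop) [Decidable P] (x y : ℝ) :
    (if P then x - y else 0) = (if P then x else 0) - (if P then y else 0) := by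
  split_ifs <;> simp

lemma aux_S1 (hl : 2 ≤ l) (X : Matrix (Fin (2*l+1)) (Fin (2*l+1)) ℝ) (a b : Fin (2*l+1)) :
    (∑ c : Fin (2*l+1), ∑ d : Fin (2*l+1),
       if 0 < (c:ℕ) ∧ (c:ℕ) < l ∧ 0 < (d:ℕ) ∧ (d:ℕ) < l
       then -(1/2) * X (rev l c) d * (if (a:ℕ) = 2*l - (d:ℕ) ∧ (b:ℕ) = (c:ℕ) then 1 else 0)
       else 0)
    = if l < (a:ℕ) ∧ (a:ℕ) < 2*l ∧ 0 < (b:ℕ) ∧ (b:ℕ) < l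
      then -(1/2) * X (rev l b) (rev l a) else 0 := by
  have ha := a.isLt; have hb := b.isLt
  by_cases hab : l < (a:ℕ) ∧ (a:ℕ) < 2*l ∧ 0 < (b:ℕ) ∧ (b:ℕ) < l
  · rw [if_pos hab]
    rw [sum2_point _ b (rev l a) ?_]
    · rw [if_pos (show 0 < (b:ℕ) ∧ (b:ℕ) < l ∧ 0 < ((rev l a : Fin (2*l+1)):ℕ) ∧ ((rev l a : Fin (2*l+1)):ℕ) < l by
        simp only [rev_coe]; omega)]
      rw [if_pos (show (a:ℕ) = 2*l - ((rev l a : Fin (2*l+1)):ℕ) ∧ (b:ℕ) = (b:ℕ) by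
        simp only [rev_coe]; exact ⟨by omega, trivial⟩)]
      rw [mul_one]
    · intro c d hf
      have hc' := c.isLt; have hd' := d.isLt
      by_cases h1 : 0 < (c:ℕ) ∧ (c:ℕ) < l ∧ 0 < (d:ℕ) ∧ (d:ℕ) < l
      · by_cases h2 : (a:ℕ) = 2*l - (d:ℕ) ∧ (b:ℕ) = (c:ℕ)
        · exact ⟨Fin.ext h2.2.symm, Fin.ext (by simp only [rev_coe]; omega)⟩
        · rw [if_pos h1, if_neg h2, mul_zero] at hf; exact absurd rfl hf
      · rw [if_neg h1] at hf; exact absurd rfl hf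
  · rw [if_neg hab]
    apply Finset.sum_eq_zero; intro c _; apply Finset.sum_eq_zero; intro d _
    have hc' := c.isLt; have hd' := d.isLt
    by_cases h1 : 0 < (c:ℕ) ∧ (c:ℕ) < l ∧ 0 < (d:ℕ) ∧ (d:ℕ) < l
    · by_cases h2 : (a:ℕ) = 2*l - (d:ℕ) ∧ (b:ℕ) = (c:ℕ)
      · exfalso; apply hab; omega
      · rw [if_pos h1, if_neg h2, mul_zero]
    · rw [if_neg h1]

lemma aux_S2 (hl : 2 ≤ l) (X : Matrix (Fin (2*l+1)) (Fin (2*l+1)) ℝ) (a b : Fin (2*l+1)) :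
    (∑ c : Fin (2*l+1), ∑ d : Fin (2*l+1),
       if 0 < (c:ℕ) ∧ (c:ℕ) < l ∧ 0 < (d:ℕ) ∧ (d:ℕ) < l
       then -(1/2) * X (rev l c) d * (if (a:ℕ) = 2*l - (c:ℕ) ∧ (b:ℕ) = (d:ℕ) then 1 else 0)
       else 0)
    = if l < (a:ℕ) ∧ (a:ℕ) < 2*l ∧ 0 < (b:ℕ) ∧ (b:ℕ) < l
      then -(1/2) * X a b else 0 := by
  have ha := a.isLt; have hb := b.isLt
  by_cases hab : l < (a:ℕ) ∧ (a:ℕ) < 2*l ∧ 0 < (b:ℕ) ∧ (b:ℕ) < l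
  · rw [if_pos hab]
    rw [sum2_point _ (rev l a) b ?_]
    · rw [if_pos (show 0 < ((rev l a : Fin (2*l+1)):ℕ) ∧ ((rev l a : Fin (2*l+1)):ℕ) < l ∧ 0 < (b:ℕ) ∧ (b:ℕ) < l by
        simp only [rev_coe]; omega)]
      rw [if_pos (show (a:ℕ) = 2*l - ((rev l a : Fin (2*l+1)):ℕ) ∧ (b:ℕ) = (b:ℕ) by
        simp only [rev_coe]; exact ⟨by omega, trivial⟩)]
      rw [mul_one, rev_rev]
    · intro c d hf
      have hc' := c.isLt; have hd' := d.isLt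
      by_cases h1 : 0 < (c:ℕ) ∧ (c:ℕ) < l ∧ 0 < (d:ℕ) ∧ (d:ℕ) < l
      · by_cases h2 : (a:ℕ) = 2*l - (c:ℕ) ∧ (b:ℕ) = (d:ℕ)
        · exact ⟨Fin.ext (by simp only [rev_coe]; omega), Fin.ext h2.2.symm⟩
        · rw [if_pos h1, if_neg h2, mul_zero] at hf; exact absurd rfl hf
      · rw [if_neg h1] at hf; exact absurd rfl hf
  · rw [if_neg hab]
    apply Finset.sum_eq_zero; intro c _; apply Finset.sum_eq_zero; intro d _
    have hc' := c.isLt; have hd' := d.isLt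
    by_cases h1 : 0 < (c:ℕ) ∧ (c:ℕ) < l ∧ 0 < (d:ℕ) ∧ (d:ℕ) < l
    · by_cases h2 : (a:ℕ) = 2*l - (c:ℕ) ∧ (b:ℕ) = (d:ℕ)
      · exfalso; apply hab; omega
      · rw [if_pos h1, if_neg h2, mul_zero]
    · rw [if_neg h1]

lemma decomp_m2 (hl : 2 ≤ l) {X : Matrix (Fin (2*l+1)) (Fin (2*l+1)) ℝ}
    (hX : X ∈ Gk18 l (-2)) :
    X = X ⟨l, by omega⟩ ⟨0, Nat.succ_pos _⟩ • T18 l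
      + ∑ c : Fin (2*l+1), ∑ d : Fin (2*l+1),
          (if 0 < (c:ℕ) ∧ (c:ℕ) < l ∧ 0 < (d:ℕ) ∧ (d:ℕ) < l
            then (-(1/2) * X (rev l c) d) • ⁅V18 l c, V18 l d⁆ else 0) := by
  obtain ⟨hG, hs⟩ := hX
  have hlN : l < 2*l+1 := by omega
  have h0N : 0 < 2*l+1 := by omega
  have hrel := (mem_G18_iff X).mp hG
  have hbr : ∀ c d : Fin (2*l+1),
      (if 0 < (c:ℕ) ∧ (c:ℕ) < l ∧ 0 < (d:ℕ) ∧ (d:ℕ) < l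
        then (-(1/2) * X (rev l c) d) • ⁅V18 l c, V18 l d⁆ else 0)
      = (if 0 < (c:ℕ) ∧ (c:ℕ) < l ∧ 0 < (d:ℕ) ∧ (d:ℕ) < l
        then (-(1/2) * X (rev l c) d) • (Em l (2*l - (d:ℕ)) (c:ℕ) - Em l (2*l - (c:ℕ)) (d:ℕ)) else 0) := by
    intro c d; split_ifs with h
    · rw [lie_V_V hl ⟨h.1, h.2.1⟩ ⟨h.2.2.1, h.2.2.2⟩]
    · rfl
  simp only [hbr]
  funext a b
  have ha := a.isLt; have hb := b.isLt
  simp only [Matrix.add_apply, Matrix.smul_apply, smul_eq_mul, Matrix.sum_apply,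
    ite_matrix_apply, Matrix.sub_apply, Matrix.zero_apply, T18, Em, of_apply, mul_sub, ite_sub_zero,
    Finset.sum_sub_distrib]
  rw [aux_S1 hl X a b, aux_S2 hl X a b]
  by_cases hwd : w18 l a - w18 l b = -2
  · have trich : ((a:ℕ) = l ∧ (b:ℕ) = 0) ∨
        (l < (a:ℕ) ∧ (a:ℕ) < 2*l ∧ 0 < (b:ℕ) ∧ (b:ℕ) < l) ∨
        ((a:ℕ) = 2*l ∧ (b:ℕ) = l) := by
      simp only [w18] at hwd; split_ifs at hwd <;> omega
    rcases trich with h | h | h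
    · rw [if_pos h, if_neg (by omega), if_neg (by omega), if_neg (by omega)]
      have e1 : a = ⟨l, hlN⟩ := Fin.ext h.1
      have e2 : b = ⟨0, h0N⟩ := Fin.ext h.2
      subst e1; subst e2; ring
    · rw [if_neg (by omega), if_neg (by omega), if_pos h, if_pos h]
      have hba : X (rev l b) (rev l a) = -(X a b) := by
        have := hrel a b; linarith
      rw [hba]; ring
    · rw [if_neg (by omega), if_pos h, if_neg (by omega), if_neg (by omega)]
      have : X a b = - X (rev l b) (rev l a) := hrel a b
      rw [this]
      have e1 : rev l b = ⟨l, by omega⟩ := Fin.ext (by simp only [rev_coe]; omega)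
      have e2 : rev l a = ⟨0, Nat.succ_pos _⟩ := Fin.ext (by simp only [rev_coe]; omega)
      rw [e1, e2]; ring
  · rw [hs a b hwd]
    rw [if_neg (fun h => hwd (by simp only [w18]; split_ifs <;> omega)),
        if_neg (fun h => hwd (by simp only [w18]; split_ifs <;> omega)),
        if_neg (fun h => hwd (by simp only [w18]; split_ifs <;> omega))]
    simp

lemma ite_add_zero' (P : Prop) [Decidable P] (x y : ℝ) :
    (if P then x + y else 0) = (if P then x else 0) + (if P then y else 0) := by
  split_ifs <;> simp

lemma aux_T1 (hl : 2 ≤ l) (X : Matrix (Fin (2*l+1)) (Fin (2*l+1)) ℝ) (a b : Fin (2*l+1)) :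
    (∑ c : Fin (2*l+1), if 0 < (c:ℕ) ∧ (c:ℕ) < l
        then -(X (rev l c) ⟨0, Nat.succ_pos _⟩) * -(if (a:ℕ) = 2*l - (c:ℕ) ∧ (b:ℕ) = 0 then 1 else 0)
        else 0)
    = if l < (a:ℕ) ∧ (a:ℕ) < 2*l ∧ (b:ℕ) = 0 then X a ⟨0, Nat.succ_pos _⟩ else 0 := by
  have ha := a.isLt; have hb := b.isLt
  by_cases hab : l < (a:ℕ) ∧ (a:ℕ) < 2*l ∧ (b:ℕ) = 0
  · rw [if_pos hab]
    rw [sum1_point _ (rev l a) ?_]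
    · rw [if_pos (show 0 < ((rev l a : Fin (2*l+1)):ℕ) ∧ ((rev l a : Fin (2*l+1)):ℕ) < l by
        simp only [rev_coe]; omega)]
      rw [if_pos (show (a:ℕ) = 2*l - ((rev l a : Fin (2*l+1)):ℕ) ∧ (b:ℕ) = 0 by
        simp only [rev_coe]; exact ⟨by omega, hab.2.2⟩)]
      rw [rev_rev]; ring
    · intro c hf
      have hc' := c.isLt
      by_cases h1 : 0 < (c:ℕ) ∧ (c:ℕ) < l
      · by_cases h2 : (a:ℕ) = 2*l - (c:ℕ) ∧ (b:ℕ) = 0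
        · exact Fin.ext (by simp only [rev_coe]; omega)
        · rw [if_pos h1, if_neg h2, neg_zero, mul_zero] at hf; exact absurd rfl hf
      · rw [if_neg h1] at hf; exact absurd rfl hf
  · rw [if_neg hab]
    apply Finset.sum_eq_zero; intro c _
    have hc' := c.isLt
    by_cases h1 : 0 < (c:ℕ) ∧ (c:ℕ) < l
    · by_cases h2 : (a:ℕ) = 2*l - (c:ℕ) ∧ (b:ℕ) = 0
      · exfalso; apply hab; omega
      · rw [if_pos h1, if_neg h2, neg_zero, mul_zero]
    · rw [if_neg h1]

lemma aux_T2 (hl : 2 ≤ l) (X : Matrix (Fin (2*l+1)) (Fin (2*l+1)) ℝ) (a b : Fin (2*l+1)) :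
    (∑ c : Fin (2*l+1), if 0 < (c:ℕ) ∧ (c:ℕ) < l
        then -(X (rev l c) ⟨0, Nat.succ_pos _⟩) * (if (a:ℕ) = 2*l ∧ (b:ℕ) = (c:ℕ) then 1 else 0)
        else 0)
    = if (a:ℕ) = 2*l ∧ 0 < (b:ℕ) ∧ (b:ℕ) < l then -(X (rev l b) ⟨0, Nat.succ_pos _⟩) else 0 := by
  have ha := a.isLt; have hb := b.isLt
  by_cases hab : (a:ℕ) = 2*l ∧ 0 < (b:ℕ) ∧ (b:ℕ) < l
  · rw [if_pos hab]
    rw [sum1_point _ b ?_]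
    · rw [if_pos (show 0 < (b:ℕ) ∧ (b:ℕ) < l from ⟨hab.2.1, hab.2.2⟩)]
      rw [if_pos ⟨hab.1, rfl⟩, mul_one]
    · intro c hf
      by_cases h1 : 0 < (c:ℕ) ∧ (c:ℕ) < l
      · by_cases h2 : (a:ℕ) = 2*l ∧ (b:ℕ) = (c:ℕ)
        · exact Fin.ext h2.2.symm
        · rw [if_pos h1, if_neg h2, mul_zero] at hf; exact absurd rfl hf
      · rw [if_neg h1] at hf; exact absurd rfl hf
  · rw [if_neg hab]
    apply Finset.sum_eq_zero; intro c _
    by_cases h1 : 0 < (c:ℕ) ∧ (c:ℕ) < l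
    · by_cases h2 : (a:ℕ) = 2*l ∧ (b:ℕ) = (c:ℕ)
      · exfalso; apply hab; omega
      · rw [if_pos h1, if_neg h2, mul_zero]
    · rw [if_neg h1]

lemma decomp_m3 (hl : 2 ≤ l) {X : Matrix (Fin (2*l+1)) (Fin (2*l+1)) ℝ}
    (hX : X ∈ Gk18 l (-3)) :
    X = ∑ c : Fin (2*l+1),
        (if 0 < (c:ℕ) ∧ (c:ℕ) < l
          then (-(X (rev l c) ⟨0, Nat.succ_pos _⟩)) • ⁅V18 l (c:ℕ), T18 l⁆ else 0) := by
  obtain ⟨hG, hs⟩ := hX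
  have h0N : 0 < 2*l+1 := by omega
  have hrel := (mem_G18_iff X).mp hG
  have hbr : ∀ c : Fin (2*l+1),
      (if 0 < (c:ℕ) ∧ (c:ℕ) < l
        then (-(X (rev l c) ⟨0, Nat.succ_pos _⟩)) • ⁅V18 l (c:ℕ), T18 l⁆ else 0)
      = (if 0 < (c:ℕ) ∧ (c:ℕ) < l
        then (-(X (rev l c) ⟨0, Nat.succ_pos _⟩)) • (- Em l (2*l - (c:ℕ)) 0 + Em l (2*l) (c:ℕ)) else 0) := by
    intro c; split_ifs with h
    · rw [lie_V_T hl h]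
    · rfl
  simp only [hbr]
  funext a b
  have ha := a.isLt; have hb := b.isLt
  simp only [Matrix.sum_apply, ite_matrix_apply, Matrix.zero_apply, Matrix.smul_apply, smul_eq_mul,
    Matrix.add_apply, Matrix.neg_apply, Em, of_apply, mul_add, mul_neg, neg_mul, neg_neg,
    ite_add_zero', Finset.sum_add_distrib]
  have e1 := aux_T1 hl X a b
  have e2 := aux_T2 hl X a b
  simp only [mul_neg, neg_neg, neg_mul] at e1 e2
  rw [e1, e2]
  by_cases hwd : w18 l a - w18 l b = -3
  · have trich : (l < (a:ℕ) ∧ (a:ℕ) < 2*l ∧ (b:ℕ) = 0) ∨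
        ((a:ℕ) = 2*l ∧ 0 < (b:ℕ) ∧ (b:ℕ) < l) := by
      simp only [w18] at hwd; split_ifs at hwd <;> omega
    rcases trich with h | h
    · rw [if_pos h, if_neg (by omega), add_zero]
      have e : b = ⟨0, h0N⟩ := Fin.ext h.2.2
      subst e; rfl
    · rw [if_neg (by omega), if_pos h, zero_add]
      have e : rev l a = ⟨0, h0N⟩ := Fin.ext (by simp only [rev_coe]; omega)
      rw [hrel a b, e]
  · rw [hs a b hwd,
        if_neg (fun h => hwd (by simp only [w18]; split_ifs <;> omega)),
        if_neg (fun h => hwd (by simp only [w18]; split_ifs <;> omega))]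
    norm_num

lemma m3_ne_bot (hl : 2 ≤ l) : Gk18 l (-3) ≠ ⊥ := by
  rw [Submodule.ne_bot_iff]
  refine ⟨Em l (l+1) 0 - Em l (2*l) (l-1), ⟨?_, ?_⟩, ?_⟩
  · rw [mem_G18_iff]
    intro a b
    have ha := a.isLt; have hb := b.isLt
    simp only [Em, Matrix.sub_apply, of_apply, rev_coe]
    split_ifs <;> (try norm_num) <;> omega
  · intro a b h
    have ha := a.isLt; have hb := b.isLt
    by_contra hne
    apply h
    simp only [Em, Matrix.sub_apply, of_apply] at hne
    split_ifs at hne <;> try norm_num at hne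
    all_goals (simp only [w18]; split_ifs <;> omega)
  · intro h0
    have h1 := congrFun (congrFun h0 ⟨l+1, by omega⟩) ⟨0, Nat.succ_pos _⟩
    simp only [Em, Matrix.sub_apply, of_apply, Matrix.zero_apply, Fin.val_mk] at h1
    rw [if_pos ⟨trivial, trivial⟩, if_neg (by omega : ¬(l+1 = 2*l ∧ (0:ℕ) = l-1))] at h1
    norm_num at h1

lemma part2_gen (hl : 2 ≤ l) (p : ℤ) (hp : p < 0) :
    (Gk18 l p : Set (Matrix (Fin (2*l+1)) (Fin (2*l+1)) ℝ)) ⊆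
      ↑(LieSubalgebra.lieSpan ℝ (Matrix (Fin (2*l+1)) (Fin (2*l+1)) ℝ) ↑(Gk18 l (-1))) := by
  intro X hX
  rw [SetLike.mem_coe] at hX ⊢
  set K := LieSubalgebra.lieSpan ℝ (Matrix (Fin (2*l+1)) (Fin (2*l+1)) ℝ)
    ((Gk18 l (-1) : Submodule ℝ (Matrix (Fin (2*l+1)) (Fin (2*l+1)) ℝ)) :
      Set (Matrix (Fin (2*l+1)) (Fin (2*l+1)) ℝ)) with hK
  have hU : ∀ c : ℕ, 0 < c ∧ c < l → U18 l c ∈ K :=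
    fun c hc => LieSubalgebra.subset_lieSpan (SetLike.mem_coe.mpr (U18_mem hl hc))
  have hV : ∀ c : ℕ, 0 < c ∧ c < l → V18 l c ∈ K :=
    fun c hc => LieSubalgebra.subset_lieSpan (SetLike.mem_coe.mpr (V18_mem hl hc))
  have h1l : (0:ℕ) < 1 ∧ 1 < l := ⟨one_pos, by omega⟩
  have hT : T18 l ∈ K := by
    have h := lie_V_U hl h1l h1l
    rw [if_pos rfl] at h
    rw [← h]
    exact K.lie_mem (hV 1 h1l) (hU 1 h1l)
  rcases (show p = -1 ∨ p = -2 ∨ p = -3 ∨ p ≤ -4 by omega) with hp' | hp' | hp' | hp'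
  · subst hp'
    exact LieSubalgebra.subset_lieSpan (SetLike.mem_coe.mpr hX)
  · subst hp'
    rw [decomp_m2 hl hX]
    apply K.add_mem
    · exact K.smul_mem _ hT
    · apply Submodule.sum_mem K.toSubmodule
      intro c _
      apply Submodule.sum_mem K.toSubmodule
      intro d _
      show _ ∈ K
      split_ifs with h
      · exact K.smul_mem _ (K.lie_mem (hV c ⟨h.1, h.2.1⟩) (hV d ⟨h.2.2.1, h.2.2.2⟩))
      · exact K.zero_mem
  · subst hp'
    rw [decomp_m3 hl hX]
    apply Submodule.sum_mem K.toSubmodule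
    intro c _
    show _ ∈ K
    split_ifs with h
    · exact K.smul_mem _ (K.lie_mem (hV c h) hT)
    · exact K.zero_mem
  · have hbot : Gk18 l p = ⊥ := part1_vanish hl p (by
      rw [abs_of_neg (by omega : p < 0)]; omega)
    rw [hbot, Submodule.mem_bot] at hX
    rw [hX]
    exact K.zero_mem

/-! ### Part 3: the bilinear form -/

lemma g_add' (X Y Z : Matrix (Fin (2*l+1)) (Fin (2*l+1)) ℝ) :
    g18 l (X + Y) Z = g18 l X Z + g18 l Y Z := by
  simp only [g18, Matrix.add_apply]
  rw [← mul_add, ← Finset.sum_add_distrib]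
  congr 1
  apply Finset.sum_congr rfl
  intro b _
  split_ifs <;> ring

lemma g_smul' (c : ℝ) (X Y : Matrix (Fin (2*l+1)) (Fin (2*l+1)) ℝ) :
    g18 l (c • X) Y = c * g18 l X Y := by
  simp only [g18, Matrix.smul_apply, smul_eq_mul]
  rw [show c * (-(1/2) * ∑ b : Fin (2*l+1), if 0 < (b:ℕ) ∧ (b:ℕ) < l then
      X ⟨l, by omega⟩ b * Y b ⟨0, Nat.succ_pos _⟩ + Y ⟨l, by omega⟩ b * X b ⟨0, Nat.succ_pos _⟩ else 0)
    = -(1/2) * ∑ b : Fin (2*l+1), c * (if 0 < (b:ℕ) ∧ (b:ℕ) < l then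
      X ⟨l, by omega⟩ b * Y b ⟨0, Nat.succ_pos _⟩ + Y ⟨l, by omega⟩ b * X b ⟨0, Nat.succ_pos _⟩ else 0)
    from by rw [← Finset.mul_sum]; ring]
  congr 1
  apply Finset.sum_congr rfl
  intro b _
  split_ifs <;> ring

lemma g_symm' (X Y : Matrix (Fin (2*l+1)) (Fin (2*l+1)) ℝ) :
    g18 l X Y = g18 l Y X := by
  simp only [g18]
  congr 1
  apply Finset.sum_congr rfl
  intro b _
  split_ifs <;> ring

lemma g_U (hl : 2 ≤ l) (X : Matrix (Fin (2*l+1)) (Fin (2*l+1)) ℝ) {c : ℕ} (hc : 0 < c ∧ c < l) :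
    g18 l X (U18 l c) = -(1/2) * X ⟨l, by omega⟩ ⟨c, by omega⟩ := by
  have hcN : c < 2*l+1 := by omega
  have hlN : l < 2*l+1 := by omega
  have h0N : 0 < 2*l+1 := by omega
  have key : ∀ b : Fin (2*l+1),
      (if 0 < (b:ℕ) ∧ (b:ℕ) < l then
        X ⟨l, by omega⟩ b * (U18 l c) b ⟨0, Nat.succ_pos _⟩
          + (U18 l c) ⟨l, by omega⟩ b * X b ⟨0, Nat.succ_pos _⟩ else 0)
      = (if b = (⟨c, hcN⟩ : Fin (2*l+1)) then X ⟨l, hlN⟩ ⟨c, hcN⟩ else 0) := by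
    intro b
    have hb := b.isLt
    by_cases hbc : b = (⟨c, hcN⟩ : Fin (2*l+1))
    · subst hbc
      rw [if_pos rfl, if_pos (show 0 < c ∧ c < l from hc)]
      simp only [U18, Em, Matrix.sub_apply, of_apply, Fin.val_mk]
      split_ifs <;> first | ring1 | (exfalso; omega) | (exfalso; tauto) | (exfalso; simp only [Fin.val_mk] at *; omega)
    · rw [if_neg hbc]
      split_ifs with h
      · have hbc' : (b:ℕ) ≠ c := fun e => hbc (Fin.ext e)
        simp only [U18, Em, Matrix.sub_apply, of_apply]
        split_ifs <;> first | ring1 | (exfalso; omega) | (exfalso; tauto) | (exfalso; simp only [Fin.val_mk] at *; omega)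
      · rfl
  rw [g18, Finset.sum_congr rfl fun b _ => key b, Finset.sum_ite_eq' Finset.univ,
    if_pos (Finset.mem_univ _)]

lemma g_V (hl : 2 ≤ l) (X : Matrix (Fin (2*l+1)) (Fin (2*l+1)) ℝ) {c : ℕ} (hc : 0 < c ∧ c < l) :
    g18 l X (V18 l c) = -(1/2) * X ⟨c, by omega⟩ ⟨0, Nat.succ_pos _⟩ := by
  have hcN : c < 2*l+1 := by omega
  have hlN : l < 2*l+1 := by omega
  have h0N : 0 < 2*l+1 := by omega
  have key : ∀ b : Fin (2*l+1),
      (if 0 < (b:ℕ) ∧ (b:ℕ) < l then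
        X ⟨l, by omega⟩ b * (V18 l c) b ⟨0, Nat.succ_pos _⟩
          + (V18 l c) ⟨l, by omega⟩ b * X b ⟨0, Nat.succ_pos _⟩ else 0)
      = (if b = (⟨c, hcN⟩ : Fin (2*l+1)) then X ⟨c, hcN⟩ ⟨0, h0N⟩ else 0) := by
    intro b
    have hb := b.isLt
    by_cases hbc : b = (⟨c, hcN⟩ : Fin (2*l+1))
    · subst hbc
      rw [if_pos rfl, if_pos (show 0 < c ∧ c < l from hc)]
      simp only [V18, Em, Matrix.sub_apply, of_apply, Fin.val_mk]
      split_ifs <;> first | ring1 | (exfalso; omega) | (exfalso; tauto) | (exfalso; simp only [Fin.val_mk] at *; omega)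
    · rw [if_neg hbc]
      split_ifs with h
      · have hbc' : (b:ℕ) ≠ c := fun e => hbc (Fin.ext e)
        simp only [V18, Em, Matrix.sub_apply, of_apply]
        split_ifs <;> first | ring1 | (exfalso; omega) | (exfalso; tauto) | (exfalso; simp only [Fin.val_mk] at *; omega)
      · rfl
  rw [g18, Finset.sum_congr rfl fun b _ => key b, Finset.sum_ite_eq' Finset.univ,
    if_pos (Finset.mem_univ _)]

lemma g_nondeg (hl : 2 ≤ l) (X : Matrix (Fin (2*l+1)) (Fin (2*l+1)) ℝ)
    (hX : X ∈ Gk18 l (-1)) (h : ∀ Y ∈ Gk18 l (-1), g18 l X Y = 0) : X = 0 := by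
  obtain ⟨hG, hs⟩ := hX
  have hrel := (mem_G18_iff X).mp hG
  have hXl : ∀ c : ℕ, 0 < c ∧ c < l → ∀ (h1 : l < 2*l+1) (h2 : c < 2*l+1),
      X ⟨l, h1⟩ ⟨c, h2⟩ = 0 := by
    intro c hc h1 h2
    have := h (U18 l c) (U18_mem hl hc)
    rw [g_U hl X hc] at this
    have h3 : X ⟨l, by omega⟩ ⟨c, by omega⟩ = 0 := by linarith
    exact h3
  have hX0 : ∀ c : ℕ, 0 < c ∧ c < l → ∀ (h1 : c < 2*l+1) (h2 : 0 < 2*l+1),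
      X ⟨c, h1⟩ ⟨0, h2⟩ = 0 := by
    intro c hc h1 h2
    have := h (V18 l c) (V18_mem hl hc)
    rw [g_V hl X hc] at this
    have h3 : X ⟨c, by omega⟩ ⟨0, Nat.succ_pos _⟩ = 0 := by linarith
    exact h3
  have hlN : l < 2*l+1 := by omega
  have h0N : 0 < 2*l+1 := Nat.succ_pos _
  funext a b
  have ha := a.isLt; have hb := b.isLt
  have hra : 2*l - (a:ℕ) < 2*l+1 := Nat.lt_succ_of_le (Nat.sub_le _ _)
  have hrb : 2*l - (b:ℕ) < 2*l+1 := Nat.lt_succ_of_le (Nat.sub_le _ _)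
  rw [Matrix.zero_apply]
  by_cases hwd : w18 l a - w18 l b = -1
  · have quad : (0 < (a:ℕ) ∧ (a:ℕ) < l ∧ (b:ℕ) = 0) ∨
        ((a:ℕ) = l ∧ 0 < (b:ℕ) ∧ (b:ℕ) < l) ∨
        (l < (a:ℕ) ∧ (a:ℕ) < 2*l ∧ (b:ℕ) = l) ∨
        ((a:ℕ) = 2*l ∧ l < (b:ℕ) ∧ (b:ℕ) < 2*l) := by
      simp only [w18] at hwd; split_ifs at hwd <;> omega
    rcases quad with hq | hq | hq | hq
    · have e2 : b = ⟨0, h0N⟩ := Fin.ext hq.2.2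
      rw [e2]
      exact hX0 (a:ℕ) ⟨hq.1, hq.2.1⟩ _ _
    · have e1 : a = ⟨l, hlN⟩ := Fin.ext hq.1
      rw [e1]
      exact hXl (b:ℕ) ⟨hq.2.1, hq.2.2⟩ _ _
    · rw [hrel a b]
      have e1 : rev l b = ⟨l, hlN⟩ := Fin.ext (by simp only [rev_coe]; omega)
      have e2 : rev l a = ⟨2*l - (a:ℕ), hra⟩ := Fin.ext rfl
      rw [e1, e2, hXl (2*l - (a:ℕ)) ⟨by omega, by omega⟩ hlN hra, neg_zero]
    · rw [hrel a b]
      have e1 : rev l b = ⟨2*l - (b:ℕ), hrb⟩ := Fin.ext rfl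
      have e2 : rev l a = ⟨0, h0N⟩ := Fin.ext (by simp only [rev_coe]; omega)
      rw [e1, e2, hX0 (2*l - (b:ℕ)) ⟨by omega, by omega⟩ hrb h0N, neg_zero]
  · exact hs a b hwd

/-! ### the parametrization of `𝔤₋₁` -/

def uex (l : ℕ) (u : Fin (l-1) → ℝ) (n : ℕ) : ℝ :=
  if h : 0 < n ∧ n < l then u ⟨n-1, by omega⟩ else 0

lemma uex_add (u v : Fin (l-1) → ℝ) (n : ℕ) :
    uex l (u + v) n = uex l u n + uex l v n := by
  unfold uex; split_ifs <;> simp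

lemma uex_smul (c : ℝ) (u : Fin (l-1) → ℝ) (n : ℕ) :
    uex l (c • u) n = c * uex l u n := by
  unfold uex; split_ifs <;> simp

lemma uex_succ (hl : 2 ≤ l) (u : Fin (l-1) → ℝ) (c : Fin (l-1)) : uex l u ((c:ℕ)+1) = u c := by
  have hc := c.isLt
  rw [uex, dif_pos (show 0 < (c:ℕ)+1 ∧ (c:ℕ)+1 < l from ⟨Nat.succ_pos _, by omega⟩)]
  exact congrArg u (Fin.ext (by simp))

def MP (l : ℕ) (ε : ℝ) (u : Fin (l-1) → ℝ) : Matrix (Fin (2*l+1)) (Fin (2*l+1)) ℝ :=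
  of fun a b =>
    if (b:ℕ) = 0 ∧ 0 < (a:ℕ) ∧ (a:ℕ) < l then uex l u a
    else if (a:ℕ) = 2*l ∧ l < (b:ℕ) ∧ (b:ℕ) < 2*l then -(uex l u (2*l - b))
    else if (a:ℕ) = l ∧ 0 < (b:ℕ) ∧ (b:ℕ) < l then ε * uex l u b
    else if (b:ℕ) = l ∧ l < (a:ℕ) ∧ (a:ℕ) < 2*l then -(ε * uex l u (2*l - a))
    else 0

lemma MP_rowl (hl : 2 ≤ l) (ε : ℝ) (u : Fin (l-1) → ℝ) (b : Fin (2*l+1))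
    (hb : 0 < (b:ℕ) ∧ (b:ℕ) < l) (h : l < 2*l+1) :
    MP l ε u ⟨l, h⟩ b = ε * uex l u b := by
  show (if (b:ℕ) = 0 ∧ 0 < l ∧ l < l then uex l u l
    else if l = 2*l ∧ l < (b:ℕ) ∧ (b:ℕ) < 2*l then -(uex l u (2*l - b))
    else if l = l ∧ 0 < (b:ℕ) ∧ (b:ℕ) < l then ε * uex l u b
    else if (b:ℕ) = l ∧ l < l ∧ l < 2*l then -(ε * uex l u (2*l - l))
    else 0) = ε * uex l u b
  rw [if_neg (by omega), if_neg (by omega), if_pos ⟨rfl, hb.1, hb.2⟩]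

lemma MP_col0 (hl : 2 ≤ l) (ε : ℝ) (u : Fin (l-1) → ℝ) (b : Fin (2*l+1))
    (hb : 0 < (b:ℕ) ∧ (b:ℕ) < l) (h : 0 < 2*l+1) :
    MP l ε u b ⟨0, h⟩ = uex l u b := by
  show (if (0:ℕ) = 0 ∧ 0 < (b:ℕ) ∧ (b:ℕ) < l then uex l u b
    else if (b:ℕ) = 2*l ∧ l < (0:ℕ) ∧ (0:ℕ) < 2*l then -(uex l u (2*l - 0))
    else if (b:ℕ) = l ∧ 0 < (0:ℕ) ∧ (0:ℕ) < l then ε * uex l u 0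
    else if (0:ℕ) = l ∧ l < (b:ℕ) ∧ (b:ℕ) < 2*l then -(ε * uex l u (2*l - b))
    else 0) = uex l u b
  rw [if_pos ⟨rfl, hb.1, hb.2⟩]

lemma MP_mem (hl : 2 ≤ l) (ε : ℝ) (u : Fin (l-1) → ℝ) : MP l ε u ∈ Gk18 l (-1) := by
  constructor
  · rw [mem_G18_iff]
    intro a b
    have ha := a.isLt; have hb := b.isLt
    simp only [MP, of_apply, rev_coe]
    by_cases h1 : (b:ℕ) = 0 ∧ 0 < (a:ℕ) ∧ (a:ℕ) < l
    · rw [if_pos h1,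
        if_neg (show ¬(2*l - (a:ℕ) = 0 ∧ 0 < 2*l - (b:ℕ) ∧ 2*l - (b:ℕ) < l) by omega),
        if_pos (show 2*l - (b:ℕ) = 2*l ∧ l < 2*l - (a:ℕ) ∧ 2*l - (a:ℕ) < 2*l by omega),
        show 2*l - (2*l - (a:ℕ)) = (a:ℕ) by omega]
      ring
    · by_cases h2 : (a:ℕ) = 2*l ∧ l < (b:ℕ) ∧ (b:ℕ) < 2*l
      · rw [if_neg h1, if_pos h2,
          if_pos (show 2*l - (a:ℕ) = 0 ∧ 0 < 2*l - (b:ℕ) ∧ 2*l - (b:ℕ) < l by omega)]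
      · by_cases h3 : (a:ℕ) = l ∧ 0 < (b:ℕ) ∧ (b:ℕ) < l
        · rw [if_neg h1, if_neg h2, if_pos h3,
            if_neg (show ¬(2*l - (a:ℕ) = 0 ∧ 0 < 2*l - (b:ℕ) ∧ 2*l - (b:ℕ) < l) by omega),
            if_neg (show ¬(2*l - (b:ℕ) = 2*l ∧ l < 2*l - (a:ℕ) ∧ 2*l - (a:ℕ) < 2*l) by omega),
            if_neg (show ¬(2*l - (b:ℕ) = l ∧ 0 < 2*l - (a:ℕ) ∧ 2*l - (a:ℕ) < l) by omega),
            if_pos (show 2*l - (a:ℕ) = l ∧ l < 2*l - (b:ℕ) ∧ 2*l - (b:ℕ) < 2*l by omega),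
            show 2*l - (2*l - (b:ℕ)) = (b:ℕ) by omega]
          ring
        · by_cases h4 : (b:ℕ) = l ∧ l < (a:ℕ) ∧ (a:ℕ) < 2*l
          · rw [if_neg h1, if_neg h2, if_neg h3, if_pos h4,
              if_neg (show ¬(2*l - (a:ℕ) = 0 ∧ 0 < 2*l - (b:ℕ) ∧ 2*l - (b:ℕ) < l) by omega),
              if_neg (show ¬(2*l - (b:ℕ) = 2*l ∧ l < 2*l - (a:ℕ) ∧ 2*l - (a:ℕ) < 2*l) by omega),
              if_pos (show 2*l - (b:ℕ) = l ∧ 0 < 2*l - (a:ℕ) ∧ 2*l - (a:ℕ) < l by omega)]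
          · rw [if_neg h1, if_neg h2, if_neg h3, if_neg h4,
              if_neg (show ¬(2*l - (a:ℕ) = 0 ∧ 0 < 2*l - (b:ℕ) ∧ 2*l - (b:ℕ) < l) by omega),
              if_neg (show ¬(2*l - (b:ℕ) = 2*l ∧ l < 2*l - (a:ℕ) ∧ 2*l - (a:ℕ) < 2*l) by omega),
              if_neg (show ¬(2*l - (b:ℕ) = l ∧ 0 < 2*l - (a:ℕ) ∧ 2*l - (a:ℕ) < l) by omega),
              if_neg (show ¬(2*l - (a:ℕ) = l ∧ l < 2*l - (b:ℕ) ∧ 2*l - (b:ℕ) < 2*l) by omega)]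
            ring
  · intro a b h
    have ha := a.isLt; have hb := b.isLt
    by_contra hne
    apply h
    simp only [MP, of_apply] at hne
    split_ifs at hne <;>
      first
      | (exact absurd rfl hne)
      | (simp only [w18]; split_ifs <;> omega)

def phi (l : ℕ) (ε : ℝ) : (Fin (l-1) → ℝ) →ₗ[ℝ] Matrix (Fin (2*l+1)) (Fin (2*l+1)) ℝ where
  toFun := MP l ε
  map_add' := by
    intro u v
    funext a b
    simp only [MP, of_apply, uex_add, Matrix.add_apply]
    split_ifs <;> ring
  map_smul' := by
    intro c u
    funext a b
    simp only [MP, of_apply, uex_smul, Matrix.smul_apply, smul_eq_mul, RingHom.id_apply]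
    split_ifs <;> ring

lemma phi_entry (hl : 2 ≤ l) (ε : ℝ) (u : Fin (l-1) → ℝ) (c : Fin (l-1))
    (h1 : (c:ℕ)+1 < 2*l+1) (h2 : 0 < 2*l+1) :
    MP l ε u ⟨(c:ℕ)+1, h1⟩ ⟨0, h2⟩ = u c := by
  have hc := c.isLt
  show (if (0:ℕ) = 0 ∧ 0 < (c:ℕ)+1 ∧ (c:ℕ)+1 < l then uex l u ((c:ℕ)+1)
    else if (c:ℕ)+1 = 2*l ∧ l < (0:ℕ) ∧ (0:ℕ) < 2*l then -(uex l u (2*l - 0))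
    else if (c:ℕ)+1 = l ∧ 0 < (0:ℕ) ∧ (0:ℕ) < l then ε * uex l u 0
    else if (0:ℕ) = l ∧ l < (c:ℕ)+1 ∧ (c:ℕ)+1 < 2*l then -(ε * uex l u (2*l - ((c:ℕ)+1)))
    else 0) = u c
  rw [if_pos ⟨rfl, Nat.succ_pos _, show (c:ℕ)+1 < l by omega⟩]
  exact uex_succ hl u c

lemma phi_entry_l (hl : 2 ≤ l) (ε : ℝ) (u : Fin (l-1) → ℝ) (c : Fin (l-1))
    (h1 : l < 2*l+1) (h2 : (c:ℕ)+1 < 2*l+1) :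
    MP l ε u ⟨l, h1⟩ ⟨(c:ℕ)+1, h2⟩ = ε * uex l u ((c:ℕ)+1) := by
  have hc := c.isLt
  exact MP_rowl hl ε u _ ⟨Nat.succ_pos _, show (c:ℕ)+1 < l by omega⟩ h1

lemma phi_inj (hl : 2 ≤ l) (ε : ℝ) : Function.Injective (phi l ε) := by
  rw [injective_iff_map_eq_zero]
  intro u hu
  funext c
  have hc := c.isLt
  have h1 := congrFun (congrFun (show MP l ε u = 0 from hu) ⟨(c:ℕ)+1, by omega⟩) ⟨0, Nat.succ_pos _⟩
  rw [phi_entry hl ε u c _ _, Matrix.zero_apply] at h1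
  exact h1

lemma g_MP (hl : 2 ≤ l) (ε ε' : ℝ) (u u' : Fin (l-1) → ℝ) :
    g18 l (MP l ε u) (MP l ε' u') =
      -((ε + ε')/2) * ∑ b : Fin (2*l+1),
        (if 0 < (b:ℕ) ∧ (b:ℕ) < l then uex l u b * uex l u' b else 0) := by
  rw [g18, show -((ε + ε')/2) * ∑ b : Fin (2*l+1),
        (if 0 < (b:ℕ) ∧ (b:ℕ) < l then uex l u b * uex l u' b else 0)
      = -(1/2) * ∑ b : Fin (2*l+1),
        (ε + ε') * (if 0 < (b:ℕ) ∧ (b:ℕ) < l then uex l u b * uex l u' b else 0)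
      from by rw [← Finset.mul_sum]; ring]
  congr 1
  apply Finset.sum_congr rfl
  intro b _
  have hb := b.isLt
  split_ifs with h
  · rw [MP_rowl hl ε u b h, MP_col0 hl ε' u' b h, MP_rowl hl ε' u' b h, MP_col0 hl ε u b h]
    ring
  · ring

lemma conformal (hl : 2 ≤ l) (A : Matrix (Fin (2*l+1)) (Fin (2*l+1)) ℝ) (hA : A ∈ Gk18 l 0)
    (X : Matrix (Fin (2*l+1)) (Fin (2*l+1)) ℝ) (hX : X ∈ Gk18 l (-1))
    (Y : Matrix (Fin (2*l+1)) (Fin (2*l+1)) ℝ) (hY : Y ∈ Gk18 l (-1)) :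
    g18 l ⁅A, X⁆ Y + g18 l X ⁅A, Y⁆ =
      -(A ⟨0, Nat.succ_pos _⟩ ⟨0, Nat.succ_pos _⟩) * g18 l X Y := by
  obtain ⟨hAG, hAs⟩ := hA
  have hlN : l < 2*l+1 := by omega
  have h0N : 0 < 2*l+1 := by omega
  have hrelA := (mem_G18_iff A).mp hAG
  -- A vanishes on row l
  have hAll : A ⟨l, hlN⟩ ⟨l, hlN⟩ = 0 := by
    have h := hrelA ⟨l, hlN⟩ ⟨l, hlN⟩
    have e : rev l ⟨l, hlN⟩ = ⟨l, hlN⟩ := Fin.ext (by simp only [rev_coe, Fin.val_mk]; omega)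
    rw [e] at h
    linarith
  have hAld : ∀ d : Fin (2*l+1), A ⟨l, hlN⟩ d = 0 := by
    intro d
    by_cases hd : (d:ℕ) = l
    · have e : d = ⟨l, hlN⟩ := Fin.ext hd
      rw [e]; exact hAll
    · apply hAs
      have hd' := d.isLt
      simp only [w18, Fin.val_mk]
      split_ifs <;> omega
  have hAd0 : ∀ d : Fin (2*l+1), (d:ℕ) ≠ 0 → A d ⟨0, h0N⟩ = 0 := by
    intro d hd
    apply hAs
    have hd' := d.isLt
    simp only [w18, Fin.val_mk]
    split_ifs <;> omega
  have hcond1 : ∀ d b : Fin (2*l+1), (0 < (b:ℕ) ∧ (b:ℕ) < l) →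
      ¬(0 < (d:ℕ) ∧ (d:ℕ) < l) → A d b = 0 := by
    intro d b hb hd
    apply hAs
    have := d.isLt; have := b.isLt
    simp only [w18]
    split_ifs <;> omega
  have hcond2 : ∀ b d : Fin (2*l+1), (0 < (b:ℕ) ∧ (b:ℕ) < l) →
      ¬(0 < (d:ℕ) ∧ (d:ℕ) < l) → A b d = 0 := by
    intro b d hb hd
    apply hAs
    have := d.isLt; have := b.isLt
    simp only [w18]
    split_ifs <;> omega
  -- bracket entries
  have hbrl : ∀ (Z : Matrix (Fin (2*l+1)) (Fin (2*l+1)) ℝ) (b : Fin (2*l+1)),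
      ⁅A, Z⁆ ⟨l, hlN⟩ b = -∑ d, Z ⟨l, hlN⟩ d * A d b := by
    intro Z b
    rw [Ring.lie_def, Matrix.sub_apply, mul_apply, mul_apply,
      Finset.sum_eq_zero (fun d _ => by rw [hAld d, zero_mul]), zero_sub]
  have hbr0 : ∀ (Z : Matrix (Fin (2*l+1)) (Fin (2*l+1)) ℝ) (b : Fin (2*l+1)),
      ⁅A, Z⁆ b ⟨0, h0N⟩ = (∑ d, A b d * Z d ⟨0, h0N⟩) - Z b ⟨0, h0N⟩ * A ⟨0, h0N⟩ ⟨0, h0N⟩ := by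
    intro Z b
    rw [Ring.lie_def, Matrix.sub_apply, mul_apply, mul_apply]
    congr 1
    rw [Finset.sum_eq_single (⟨0, h0N⟩ : Fin (2*l+1))]
    · intro d _ hd
      rw [hAd0 d (fun e => hd (Fin.ext e)), mul_zero]
    · intro h; exact absurd (Finset.mem_univ _) h
  -- the cross cancellation
  have cross : ∀ (Z W : Matrix (Fin (2*l+1)) (Fin (2*l+1)) ℝ),
      (∑ b : Fin (2*l+1), if 0 < (b:ℕ) ∧ (b:ℕ) < l
        then (∑ d, Z ⟨l, hlN⟩ d * A d b) * W b ⟨0, h0N⟩ else 0)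
      = (∑ b : Fin (2*l+1), if 0 < (b:ℕ) ∧ (b:ℕ) < l
        then Z ⟨l, hlN⟩ b * (∑ d, A b d * W d ⟨0, h0N⟩) else 0) := by
    intro Z W
    have lhs_eq : (∑ b : Fin (2*l+1), if 0 < (b:ℕ) ∧ (b:ℕ) < l
        then (∑ d, Z ⟨l, hlN⟩ d * A d b) * W b ⟨0, h0N⟩ else 0)
        = ∑ b : Fin (2*l+1), ∑ d : Fin (2*l+1),
          (if (0 < (b:ℕ) ∧ (b:ℕ) < l) ∧ (0 < (d:ℕ) ∧ (d:ℕ) < l)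
            then Z ⟨l, hlN⟩ d * A d b * W b ⟨0, h0N⟩ else 0) := by
      apply Finset.sum_congr rfl
      intro b _
      by_cases hb : 0 < (b:ℕ) ∧ (b:ℕ) < l
      · rw [if_pos hb, Finset.sum_mul]
        apply Finset.sum_congr rfl
        intro d _
        by_cases hd : 0 < (d:ℕ) ∧ (d:ℕ) < l
        · rw [if_pos ⟨hb, hd⟩]
        · rw [if_neg (fun hq => hd hq.2), hcond1 d b hb hd]
          ring
      · rw [if_neg hb, Finset.sum_eq_zero]
        intro d _
        rw [if_neg (fun hq => hb hq.1)]
    have rhs_eq : (∑ b : Fin (2*l+1), if 0 < (b:ℕ) ∧ (b:ℕ) < l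
        then Z ⟨l, hlN⟩ b * (∑ d, A b d * W d ⟨0, h0N⟩) else 0)
        = ∑ b : Fin (2*l+1), ∑ d : Fin (2*l+1),
          (if (0 < (d:ℕ) ∧ (d:ℕ) < l) ∧ (0 < (b:ℕ) ∧ (b:ℕ) < l)
            then Z ⟨l, hlN⟩ b * A b d * W d ⟨0, h0N⟩ else 0) := by
      apply Finset.sum_congr rfl
      intro b _
      by_cases hb : 0 < (b:ℕ) ∧ (b:ℕ) < l
      · rw [if_pos hb, Finset.mul_sum]
        apply Finset.sum_congr rfl
        intro d _
        by_cases hd : 0 < (d:ℕ) ∧ (d:ℕ) < l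
        · rw [if_pos ⟨hd, hb⟩]; ring
        · rw [if_neg (fun hq => hd hq.1), hcond2 b d hb hd]
          ring
      · rw [if_neg hb, Finset.sum_eq_zero]
        intro d _
        rw [if_neg (fun hq => hb hq.2)]
    rw [lhs_eq, rhs_eq, Finset.sum_comm]
  -- expand everything
  simp only [g18, hbrl, hbr0]
  have split1 : ∀ (Z W : Matrix (Fin (2*l+1)) (Fin (2*l+1)) ℝ) (b : Fin (2*l+1)),
      (if 0 < (b:ℕ) ∧ (b:ℕ) < l then
        (-∑ d, Z ⟨l, hlN⟩ d * A d b) * W b ⟨0, h0N⟩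
          + W ⟨l, hlN⟩ b * ((∑ d, A b d * Z d ⟨0, h0N⟩) - Z b ⟨0, h0N⟩ * A ⟨0, h0N⟩ ⟨0, h0N⟩)
        else 0)
      = -(if 0 < (b:ℕ) ∧ (b:ℕ) < l then (∑ d, Z ⟨l, hlN⟩ d * A d b) * W b ⟨0, h0N⟩ else 0)
        + (if 0 < (b:ℕ) ∧ (b:ℕ) < l then W ⟨l, hlN⟩ b * (∑ d, A b d * Z d ⟨0, h0N⟩) else 0)
        + (-(A ⟨0, h0N⟩ ⟨0, h0N⟩)) * (if 0 < (b:ℕ) ∧ (b:ℕ) < l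
            then W ⟨l, hlN⟩ b * Z b ⟨0, h0N⟩ else 0) := by
    intro Z W b
    split_ifs <;> ring
  have split2 : ∀ (Z W : Matrix (Fin (2*l+1)) (Fin (2*l+1)) ℝ) (b : Fin (2*l+1)),
      (if 0 < (b:ℕ) ∧ (b:ℕ) < l then
        W ⟨l, hlN⟩ b * ((∑ d, A b d * Z d ⟨0, h0N⟩) - Z b ⟨0, h0N⟩ * A ⟨0, h0N⟩ ⟨0, h0N⟩)
          + (-∑ d, Z ⟨l, hlN⟩ d * A d b) * W b ⟨0, h0N⟩
        else 0)
      = -(if 0 < (b:ℕ) ∧ (b:ℕ) < l then (∑ d, Z ⟨l, hlN⟩ d * A d b) * W b ⟨0, h0N⟩ else 0)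
        + (if 0 < (b:ℕ) ∧ (b:ℕ) < l then W ⟨l, hlN⟩ b * (∑ d, A b d * Z d ⟨0, h0N⟩) else 0)
        + (-(A ⟨0, h0N⟩ ⟨0, h0N⟩)) * (if 0 < (b:ℕ) ∧ (b:ℕ) < l
            then W ⟨l, hlN⟩ b * Z b ⟨0, h0N⟩ else 0) := by
    intro Z W b
    split_ifs <;> ring
  rw [Finset.sum_congr rfl (fun b _ => split1 X Y b),
      Finset.sum_congr rfl (fun b _ => split2 Y X b)]
  rw [Finset.sum_add_distrib, Finset.sum_add_distrib, Finset.sum_add_distrib,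
      Finset.sum_add_distrib, ← Finset.mul_sum, ← Finset.mul_sum,
      Finset.sum_neg_distrib, Finset.sum_neg_distrib]
  rw [cross X Y, cross Y X]
  have split3 : ∀ b : Fin (2*l+1),
      (if 0 < (b:ℕ) ∧ (b:ℕ) < l then
        X ⟨l, hlN⟩ b * Y b ⟨0, h0N⟩ + Y ⟨l, hlN⟩ b * X b ⟨0, h0N⟩ else 0)
      = (if 0 < (b:ℕ) ∧ (b:ℕ) < l then X ⟨l, hlN⟩ b * Y b ⟨0, h0N⟩ else 0)
        + (if 0 < (b:ℕ) ∧ (b:ℕ) < l then Y ⟨l, hlN⟩ b * X b ⟨0, h0N⟩ else 0) := by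
    intro b; split_ifs <;> ring
  rw [Finset.sum_congr rfl (fun b _ => split3 b), Finset.sum_add_distrib]
  ring

lemma m1_zero (hl : 2 ≤ l) {Z : Matrix (Fin (2*l+1)) (Fin (2*l+1)) ℝ}
    (hZ : Z ∈ Gk18 l (-1))
    (hXl : ∀ c : ℕ, 0 < c ∧ c < l → ∀ (h1 : l < 2*l+1) (h2 : c < 2*l+1),
      Z ⟨l, h1⟩ ⟨c, h2⟩ = 0)
    (hX0 : ∀ c : ℕ, 0 < c ∧ c < l → ∀ (h1 : c < 2*l+1) (h2 : 0 < 2*l+1),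
      Z ⟨c, h1⟩ ⟨0, h2⟩ = 0) : Z = 0 := by
  obtain ⟨hG, hs⟩ := hZ
  have hrel := (mem_G18_iff Z).mp hG
  have hlN : l < 2*l+1 := by omega
  have h0N : 0 < 2*l+1 := Nat.succ_pos _
  funext a b
  have ha := a.isLt; have hb := b.isLt
  have hra : 2*l - (a:ℕ) < 2*l+1 := Nat.lt_succ_of_le (Nat.sub_le _ _)
  have hrb : 2*l - (b:ℕ) < 2*l+1 := Nat.lt_succ_of_le (Nat.sub_le _ _)
  rw [Matrix.zero_apply]
  by_cases hwd : w18 l a - w18 l b = -1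
  · have quad : (0 < (a:ℕ) ∧ (a:ℕ) < l ∧ (b:ℕ) = 0) ∨
        ((a:ℕ) = l ∧ 0 < (b:ℕ) ∧ (b:ℕ) < l) ∨
        (l < (a:ℕ) ∧ (a:ℕ) < 2*l ∧ (b:ℕ) = l) ∨
        ((a:ℕ) = 2*l ∧ l < (b:ℕ) ∧ (b:ℕ) < 2*l) := by
      simp only [w18] at hwd; split_ifs at hwd <;> omega
    rcases quad with hq | hq | hq | hq
    · have e2 : b = ⟨0, h0N⟩ := Fin.ext hq.2.2
      rw [e2]
      exact hX0 (a:ℕ) ⟨hq.1, hq.2.1⟩ _ _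
    · have e1 : a = ⟨l, hlN⟩ := Fin.ext hq.1
      rw [e1]
      exact hXl (b:ℕ) ⟨hq.2.1, hq.2.2⟩ _ _
    · rw [hrel a b]
      have e1 : rev l b = ⟨l, hlN⟩ := Fin.ext (by simp only [rev_coe]; omega)
      have e2 : rev l a = ⟨2*l - (a:ℕ), hra⟩ := Fin.ext rfl
      rw [e1, e2, hXl (2*l - (a:ℕ)) ⟨by omega, by omega⟩ hlN hra, neg_zero]
    · rw [hrel a b]
      have e1 : rev l b = ⟨2*l - (b:ℕ), hrb⟩ := Fin.ext rfl
      have e2 : rev l a = ⟨0, h0N⟩ := Fin.ext (by simp only [rev_coe]; omega)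
      rw [e1, e2, hX0 (2*l - (b:ℕ)) ⟨by omega, by omega⟩ hrb h0N, neg_zero]
  · exact hs a b hwd

def col0 (l : ℕ) (X : Matrix (Fin (2*l+1)) (Fin (2*l+1)) ℝ) (n : ℕ) : ℝ :=
  if h : n < 2*l+1 then X ⟨n, h⟩ ⟨0, Nat.succ_pos _⟩ else 0

def rowl (l : ℕ) (X : Matrix (Fin (2*l+1)) (Fin (2*l+1)) ℝ) (n : ℕ) : ℝ :=
  if h : l < 2*l+1 ∧ n < 2*l+1 then X ⟨l, h.1⟩ ⟨n, h.2⟩ else 0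

lemma decomp_m1 (hl : 2 ≤ l) {X : Matrix (Fin (2*l+1)) (Fin (2*l+1)) ℝ}
    (hX : X ∈ Gk18 l (-1)) :
    ∃ w1 w2 : Fin (l-1) → ℝ, X = MP l (-1) w1 + MP l 1 w2 := by
  have hlN : l < 2*l+1 := by omega
  have h0N : 0 < 2*l+1 := Nat.succ_pos _
  refine ⟨fun c => (col0 l X ((c:ℕ)+1) - rowl l X ((c:ℕ)+1))/2,
          fun c => (col0 l X ((c:ℕ)+1) + rowl l X ((c:ℕ)+1))/2, ?_⟩
  have hu1 : ∀ n : ℕ, 0 < n ∧ n < l →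
      uex l (fun c => (col0 l X ((c:ℕ)+1) - rowl l X ((c:ℕ)+1))/2) n
        = (col0 l X n - rowl l X n)/2 := by
    intro n hn
    rw [uex, dif_pos hn]
    simp only [Fin.val_mk]
    rw [show n-1+1 = n from by omega]
  have hu2 : ∀ n : ℕ, 0 < n ∧ n < l →
      uex l (fun c => (col0 l X ((c:ℕ)+1) + rowl l X ((c:ℕ)+1))/2) n
        = (col0 l X n + rowl l X n)/2 := by
    intro n hn
    rw [uex, dif_pos hn]
    simp only [Fin.val_mk]
    rw [show n-1+1 = n from by omega]
  have hZ : X - (MP l (-1) (fun c => (col0 l X ((c:ℕ)+1) - rowl l X ((c:ℕ)+1))/2)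
      + MP l 1 (fun c => (col0 l X ((c:ℕ)+1) + rowl l X ((c:ℕ)+1))/2)) = 0 := by
    apply m1_zero hl ((Gk18 l (-1)).sub_mem hX ((Gk18 l (-1)).add_mem
      (MP_mem hl _ _) (MP_mem hl _ _)))
    · intro c hc h1 h2
      rw [Matrix.sub_apply, Matrix.add_apply, MP_rowl hl _ _ ⟨c,h2⟩ hc h1, MP_rowl hl _ _ ⟨c,h2⟩ hc h1]
      show X ⟨l,h1⟩ ⟨c,h2⟩
        - ((-1) * uex l (fun c => (col0 l X ((c:ℕ)+1) - rowl l X ((c:ℕ)+1))/2) c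
          + 1 * uex l (fun c => (col0 l X ((c:ℕ)+1) + rowl l X ((c:ℕ)+1))/2) c) = 0
      rw [hu1 c hc, hu2 c hc, col0, dif_pos (show c < 2*l+1 from h2), rowl,
        dif_pos (show l < 2*l+1 ∧ c < 2*l+1 from ⟨hlN, h2⟩)]
      ring
    · intro c hc h1 h2
      rw [Matrix.sub_apply, Matrix.add_apply, MP_col0 hl _ _ ⟨c,h1⟩ hc h2, MP_col0 hl _ _ ⟨c,h1⟩ hc h2]
      show X ⟨c,h1⟩ ⟨0,h2⟩
        - (uex l (fun c => (col0 l X ((c:ℕ)+1) - rowl l X ((c:ℕ)+1))/2) c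
          + uex l (fun c => (col0 l X ((c:ℕ)+1) + rowl l X ((c:ℕ)+1))/2) c) = 0
      rw [hu1 c hc, hu2 c hc, col0, dif_pos (show c < 2*l+1 from h1), rowl,
        dif_pos (show l < 2*l+1 ∧ c < 2*l+1 from ⟨hlN, h1⟩)]
      ring
  exact (sub_eq_zero.mp hZ)

end S18aux

open S18aux in
/-- The gradation of `𝔤 = 𝔰𝔬(l+1, l)` defined by the weights above:
it is a GLA with `𝔤_k = 0` for `|k| > 3` whose negative part is an FGLA of the third kind,
the form `g(X,Y) = -(1/2)(X₃₂Y₂₁ + Y₃₂X₂₁)` is a nondegenerate symmetric bilinear form of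
neutral signature `(l-1, l-1)` on `𝔤₋₁`, and `𝔤₀` acts conformally on `𝔤₋₁` with conformal
factor `-A₁₁`. -/
theorem so_l1_l_grading (l : ℕ) (hl : 2 ≤ l) :
    -- (1) internal direct sum, bracket compatibility, vanishing for `|k| > 3`:
    DirectSum.IsInternal (fun k : ℤ => (Gk18 l k).comap (G18 l).subtype) ∧
    (∀ j k : ℤ, ∀ X ∈ Gk18 l j, ∀ Y ∈ Gk18 l k, ⁅X, Y⁆ ∈ Gk18 l (j + k)) ∧
    (∀ k : ℤ, 3 < |k| → Gk18 l k = ⊥) ∧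
    -- (2) the negative part is an FGLA of the third kind:
    Gk18 l (-3) ≠ ⊥ ∧
    (∀ p : ℤ, p < 0 → (Gk18 l p : Set (Matrix (Fin (2*l+1)) (Fin (2*l+1)) ℝ)) ⊆
      ↑(LieSubalgebra.lieSpan ℝ (Matrix (Fin (2*l+1)) (Fin (2*l+1)) ℝ) ↑(Gk18 l (-1)))) ∧
    -- (3) `g18` is a nondegenerate symmetric bilinear form on `𝔤₋₁` of neutral signature
    -- `(l-1, l-1)`:
    (∀ X Y Z, g18 l (X + Y) Z = g18 l X Z + g18 l Y Z) ∧
    (∀ (c : ℝ) X Y, g18 l (c • X) Y = c * g18 l X Y) ∧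
    (∀ X Y, g18 l X Y = g18 l Y X) ∧
    (∀ X ∈ Gk18 l (-1), (∀ Y ∈ Gk18 l (-1), g18 l X Y = 0) → X = 0) ∧
    (∃ P N : Submodule ℝ (Matrix (Fin (2*l+1)) (Fin (2*l+1)) ℝ),
      P ⊓ N = ⊥ ∧ P ⊔ N = Gk18 l (-1) ∧
      Module.finrank ℝ ↥P = l - 1 ∧ Module.finrank ℝ ↥N = l - 1 ∧
      (∀ X ∈ P, ∀ Y ∈ N, g18 l X Y = 0) ∧
      (∀ X ∈ P, X ≠ 0 → 0 < g18 l X X) ∧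
      (∀ X ∈ N, X ≠ 0 → g18 l X X < 0)) ∧
    -- (4) `𝔤₀` acts conformally on `(𝔤₋₁, g)` with factor `-A₁₁`:
    (∀ A ∈ Gk18 l 0, ∀ X ∈ Gk18 l (-1), ∀ Y ∈ Gk18 l (-1),
      g18 l ⁅A, X⁆ Y + g18 l X ⁅A, Y⁆ =
        -(A ⟨0, by omega⟩ ⟨0, by omega⟩) * g18 l X Y) := by
  constructor
  · exact part1_internal hl
  constructor
  · exact fun j k X hX Y hY => part1_bracket hl j k X hX Y hY
  constructor
  · exact fun k hk => part1_vanish hl k hk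
  constructor
  · exact m3_ne_bot hl
  constructor
  · exact fun p hp => part2_gen hl p hp
  constructor
  · exact fun X Y Z => g_add' X Y Z
  constructor
  · exact fun c X Y => g_smul' c X Y
  constructor
  · exact fun X Y => g_symm' X Y
  constructor
  · exact fun X hX h => g_nondeg hl X hX h
  constructor
  · -- signature
    refine ⟨LinearMap.range (phi l (-1)), LinearMap.range (phi l 1), ?_, ?_, ?_, ?_, ?_, ?_, ?_⟩
    · -- P ⊓ N = ⊥
      rw [eq_bot_iff]
      rintro x hx
      obtain ⟨hxP, hxN⟩ := Submodule.mem_inf.mp hx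
      obtain ⟨u, hu⟩ := hxP
      obtain ⟨v, hv⟩ := hxN
      have hx' : MP l (-1) u = MP l 1 v := hu.trans hv.symm
      have hzero : ∀ c : Fin (l-1), u c = 0 := by
        intro c
        have hc := c.isLt
        have e1 := congrFun (congrFun hx' ⟨(c:ℕ)+1, by omega⟩) ⟨0, by omega⟩
        rw [phi_entry hl (-1) u c _ _, phi_entry hl 1 v c _ _] at e1
        have e2 := congrFun (congrFun hx' ⟨l, by omega⟩) ⟨(c:ℕ)+1, by omega⟩
        rw [phi_entry_l hl (-1) u c _ _, phi_entry_l hl 1 v c _ _,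
          uex_succ hl u c, uex_succ hl v c] at e2
        -- e1 : u c = v c, e2 : -1 * u c = 1 * v c
        nlinarith [e1, e2]
      rw [Submodule.mem_bot, ← hu, show u = 0 from funext hzero, map_zero]
    · -- P ⊔ N = Gk18 l (-1)
      apply le_antisymm
      · apply sup_le
        · rintro _ ⟨u, rfl⟩
          exact MP_mem hl (-1) u
        · rintro _ ⟨u, rfl⟩
          exact MP_mem hl 1 u
      · intro X hX
        obtain ⟨w1, w2, hw⟩ := decomp_m1 hl hX
        rw [hw]
        exact Submodule.add_mem_sup (LinearMap.mem_range_self _ w1)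
          (LinearMap.mem_range_self _ w2)
    · exact (LinearMap.finrank_range_of_inj (phi_inj hl (-1))).trans (Module.finrank_fin_fun ℝ)
    · exact (LinearMap.finrank_range_of_inj (phi_inj hl 1)).trans (Module.finrank_fin_fun ℝ)
    · -- orthogonality
      rintro _ ⟨u, rfl⟩ _ ⟨v, rfl⟩
      show g18 l (MP l (-1) u) (MP l 1 v) = 0
      rw [g_MP hl (-1) 1 u v]
      norm_num
    · -- positivity on P
      rintro _ ⟨u, rfl⟩ hne
      show 0 < g18 l (MP l (-1) u) (MP l (-1) u)
      rw [g_MP hl (-1) (-1) u u,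
        show -(((-1:ℝ) + -1)/2) = 1 by norm_num, one_mul]
      have hune : u ≠ 0 := by
        intro h0
        exact hne (by show MP l (-1) u = 0; rw [show u = 0 from h0]; exact map_zero (phi l (-1)))
      obtain ⟨c, hc⟩ := Function.ne_iff.mp hune
      have hcl := c.isLt
      apply Finset.sum_pos'
      · intro b _
        split_ifs
        · exact mul_self_nonneg _
        · exact le_refl 0
      · refine ⟨⟨(c:ℕ)+1, by omega⟩, Finset.mem_univ _, ?_⟩
        rw [if_pos (show 0 < (c:ℕ)+1 ∧ (c:ℕ)+1 < l from ⟨Nat.succ_pos _, by omega⟩)]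
        have he : uex l u (((⟨(c:ℕ)+1, by omega⟩ : Fin (2*l+1)) : ℕ)) = u c := uex_succ hl u c
        rw [he]
        exact mul_self_pos.mpr (by simpa using hc)
    · -- negativity on N
      rintro _ ⟨u, rfl⟩ hne
      show g18 l (MP l 1 u) (MP l 1 u) < 0
      rw [g_MP hl 1 1 u u, show -(((1:ℝ) + 1)/2) = -1 by norm_num, neg_one_mul, neg_lt_zero]
      have hune : u ≠ 0 := by
        intro h0
        exact hne (by show MP l 1 u = 0; rw [show u = 0 from h0]; exact map_zero (phi l 1))
      obtain ⟨c, hc⟩ := Function.ne_iff.mp hune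
      have hcl := c.isLt
      apply Finset.sum_pos'
      · intro b _
        split_ifs
        · exact mul_self_nonneg _
        · exact le_refl 0
      · refine ⟨⟨(c:ℕ)+1, by omega⟩, Finset.mem_univ _, ?_⟩
        rw [if_pos (show 0 < (c:ℕ)+1 ∧ (c:ℕ)+1 < l from ⟨Nat.succ_pos _, by omega⟩)]
        have he : uex l u (((⟨(c:ℕ)+1, by omega⟩ : Fin (2*l+1)) : ℕ)) = u c := uex_succ hl u c
        rw [he]
        exact mul_self_pos.mpr (by simpa using hc)
  · exact fun A hA X hX Y hY => conformal hl A hA X hX Y hY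

end
end
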